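/- arXiv:1003.1189 — 5 statements merged into one kernel-verified Lean document; each statement's English description precedes it below -/
import Mathlib

section
/- Let P_X be a probability measure on 𝒳, let φ₁,…,φ_M ∈ L²(𝒳,P_X) satisfy ‖φ_j‖_{P_X,2} = 1 for all j, let f ∈ L²(𝒳,P_X), and let λ^C be a minimizer of λ ↦ ‖f_λ − f‖²_{P_X,2} over {λ ∈ ℝ^M : ‖λ‖₁ ≤ 1}. Then for every integer s ≥ 1 with ‖λ^C‖₀ ≥ 1: inf over {λ : ‖λ‖₁ ≤ 1, ‖λ‖₀ ≤ s} of ‖f_λ − f‖²_{P_X,2} ≤ ‖f_{λ^C} − f‖²_{P_X,2} + ‖λ^C‖₁² / min(s, ‖λ^C‖₀). -/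
open MeasureTheory

lemma sum_prod_pi {n M : ℕ} (u : Fin n → Fin M → ℝ) :
    ∑ ω : Fin n → Fin M, ∏ i, u i (ω i) = ∏ i, ∑ j, u i j :=
  (Fintype.prod_sum (κ := fun _ : Fin n => Fin M) u).symm

lemma sum_prod_marginal {n M : ℕ} (p : Fin M → ℝ) (hp1 : ∑ j, p j = 1)
    (i0 : Fin n) (h : Fin M → ℝ) :
    ∑ ω : Fin n → Fin M, (∏ i, p (ω i)) * h (ω i0) = ∑ j, p j * h j := by
  have e1 : ∀ ω : Fin n → Fin M,
      (∏ i, p (ω i)) * h (ω i0)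
        = ∏ i, (p (ω i) * if i = i0 then h (ω i) else 1) := by
    intro ω
    rw [Finset.prod_mul_distrib, Finset.prod_ite_eq' Finset.univ i0 (fun i => h (ω i))]
    simp
  rw [Finset.sum_congr rfl fun ω _ => e1 ω,
    sum_prod_pi (fun i j => p j * if i = i0 then h j else 1)]
  have e2 : ∀ i : Fin n,
      (∑ j, p j * if i = i0 then h j else 1) = if i = i0 then ∑ j, p j * h j else 1 := by
    intro i; by_cases hi : i = i0 <;> simp [hi, hp1]
  rw [Finset.prod_congr rfl fun i _ => e2 i,
    Finset.prod_ite_eq' Finset.univ i0 (fun _ => ∑ j, p j * h j)]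
  simp

lemma sum_prod_pair {n M : ℕ} (p : Fin M → ℝ) (hp1 : ∑ j, p j = 1)
    (i0 i1 : Fin n) (hne : i0 ≠ i1) (h : Fin M → ℝ) :
    ∑ ω : Fin n → Fin M, (∏ i, p (ω i)) * (h (ω i0) * h (ω i1))
      = (∑ j, p j * h j) * (∑ j, p j * h j) := by
  have e1 : ∀ ω : Fin n → Fin M,
      (∏ i, p (ω i)) * (h (ω i0) * h (ω i1))
        = ∏ i, (p (ω i) * ((if i = i0 then h (ω i) else 1) * (if i = i1 then h (ω i) else 1))) := by
    intro ω
    rw [Finset.prod_mul_distrib, Finset.prod_mul_distrib,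
      Finset.prod_ite_eq' Finset.univ i0 (fun i => h (ω i)),
      Finset.prod_ite_eq' Finset.univ i1 (fun i => h (ω i))]
    simp
  rw [Finset.sum_congr rfl fun ω _ => e1 ω,
    sum_prod_pi (fun i j => p j * ((if i = i0 then h j else 1) * (if i = i1 then h j else 1)))]
  have e2 : ∀ i : Fin n,
      (∑ j, p j * ((if i = i0 then h j else 1) * (if i = i1 then h j else 1)))
        = (if i = i0 then (∑ j, p j * h j) else 1) * (if i = i1 then (∑ j, p j * h j) else 1) := by
    intro i
    by_cases h0 : i = i0 <;> by_cases h1 : i = i1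
    · exact absurd (h0.symm.trans h1) hne
    · simp [h0, h1, hne]
    · simp [h0, h1, hne.symm]
    · simp [h0, h1, hp1]
  rw [Finset.prod_congr rfl fun i _ => e2 i, Finset.prod_mul_distrib,
    Finset.prod_ite_eq' Finset.univ i0 (fun _ => ∑ j, p j * h j),
    Finset.prod_ite_eq' Finset.univ i1 (fun _ => ∑ j, p j * h j)]
  simp

lemma maurey_expectation {n M : ℕ} (hn : 1 ≤ n) (p : Fin M → ℝ)
    (hp : ∀ j, 0 ≤ p j) (hp1 : ∑ j, p j = 1)
    (h a : Fin M → ℝ) (hh : ∀ j, h j ^ 2 ≤ a j ^ 2) (F Lc : ℝ) :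
    ∑ ω : Fin n → Fin M, (∏ i, p (ω i)) * ((Lc / n) * (∑ i, h (ω i)) - F) ^ 2
      ≤ (Lc * (∑ j, p j * h j) - F) ^ 2 + Lc ^ 2 / n * (∑ j, p j * a j ^ 2) := by
  have hn0 : (0:ℝ) < n := by exact_mod_cast hn
  set S := ∑ j, p j * h j with hS
  set Q := ∑ j, p j * (h j * h j) with hQ
  have hw1 : ∑ ω : Fin n → Fin M, ∏ i, p (ω i) = 1 := by
    rw [sum_prod_pi (fun _ j => p j)]
    simp [hp1]
  have E1 : ∑ ω : Fin n → Fin M, (∏ i, p (ω i)) * (∑ i, h (ω i)) = n * S := by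
    calc ∑ ω : Fin n → Fin M, (∏ i, p (ω i)) * ∑ i, h (ω i)
        = ∑ ω : Fin n → Fin M, ∑ i, (∏ i', p (ω i')) * h (ω i) :=
          Finset.sum_congr rfl fun ω _ => Finset.mul_sum _ _ _
      _ = ∑ i : Fin n, ∑ ω : Fin n → Fin M, (∏ i', p (ω i')) * h (ω i) := Finset.sum_comm
      _ = ∑ i : Fin n, S := Finset.sum_congr rfl fun i _ => sum_prod_marginal p hp1 i h
      _ = n * S := by simp [Finset.card_univ, nsmul_eq_mul]
  have inner : ∀ i i' : Fin n,
      ∑ ω : Fin n → Fin M, (∏ i'', p (ω i'')) * (h (ω i) * h (ω i'))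
        = if i = i' then Q else S * S := by
    intro i i'
    by_cases hii : i = i'
    · subst hii
      rw [if_pos rfl]
      exact sum_prod_marginal p hp1 i (fun j => h j * h j)
    · rw [if_neg hii]; exact sum_prod_pair p hp1 i i' hii h
  have E2 : ∑ ω : Fin n → Fin M, (∏ i, p (ω i)) * (∑ i, ∑ i', h (ω i) * h (ω i'))
      = n * Q + ((n:ℝ)^2 - n) * (S * S) := by
    calc ∑ ω : Fin n → Fin M, (∏ i, p (ω i)) * ∑ i, ∑ i', h (ω i) * h (ω i')
        = ∑ ω : Fin n → Fin M, ∑ i, ∑ i', (∏ i'', p (ω i'')) * (h (ω i) * h (ω i')) := by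
          refine Finset.sum_congr rfl fun ω _ => ?_
          rw [Finset.mul_sum]
          exact Finset.sum_congr rfl fun i _ => Finset.mul_sum _ _ _
      _ = ∑ i : Fin n, ∑ ω : Fin n → Fin M, ∑ i',
            (∏ i'', p (ω i'')) * (h (ω i) * h (ω i')) := Finset.sum_comm
      _ = ∑ i : Fin n, ∑ i' : Fin n, ∑ ω : Fin n → Fin M,
            (∏ i'', p (ω i'')) * (h (ω i) * h (ω i')) :=
          Finset.sum_congr rfl fun i _ => Finset.sum_comm
      _ = ∑ i : Fin n, ∑ i' : Fin n, (if i = i' then Q else S * S) :=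
          Finset.sum_congr rfl fun i _ => Finset.sum_congr rfl fun i' _ => inner i i'
      _ = n * Q + ((n:ℝ)^2 - n) * (S * S) := by
          have key : ∀ i : Fin n, ∑ i' : Fin n, (if i = i' then Q else S * S)
              = Q + ((n:ℝ) - 1) * (S * S) := by
            intro i
            have e : ∀ i' : Fin n, (if i = i' then Q else S * S)
                = S * S + (if i = i' then Q - S * S else 0) := by
              intro i'; split <;> ring
            rw [Finset.sum_congr rfl fun i' _ => e i', Finset.sum_add_distrib,
              Finset.sum_ite_eq Finset.univ i (fun _ => Q - S * S)]
            simp [Finset.card_univ, nsmul_eq_mul]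
            ring
          rw [Finset.sum_congr rfl fun i _ => key i]
          simp [Finset.card_univ, nsmul_eq_mul]
          ring
  have expand : ∀ ω : Fin n → Fin M,
      (∏ i, p (ω i)) * ((Lc / n) * (∑ i, h (ω i)) - F) ^ 2
        = (Lc / n)^2 * ((∏ i, p (ω i)) * (∑ i, ∑ i', h (ω i) * h (ω i')))
          - (2 * (Lc / n) * F) * ((∏ i, p (ω i)) * (∑ i, h (ω i)))
          + F^2 * (∏ i, p (ω i)) := by
    intro ω
    have hD : (∑ i, h (ω i)) * (∑ i, h (ω i)) = ∑ i, ∑ i', h (ω i) * h (ω i') :=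
      Fintype.sum_mul_sum _ _
    rw [← hD]; ring
  rw [Finset.sum_congr rfl fun ω _ => expand ω, Finset.sum_add_distrib,
    Finset.sum_sub_distrib, ← Finset.mul_sum, ← Finset.mul_sum, ← Finset.mul_sum,
    E1, E2, hw1]
  have hQA : Q ≤ ∑ j, p j * a j ^ 2 := by
    refine Finset.sum_le_sum fun j _ => mul_le_mul_of_nonneg_left ?_ (hp j)
    calc h j * h j = h j ^ 2 := by ring
      _ ≤ a j ^ 2 := hh j
  have heq : (Lc / n)^2 * (n * Q + ((n:ℝ)^2 - n) * (S * S))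
      - (2 * (Lc / n) * F) * (n * S) + F^2 * 1
      = (Lc * S - F)^2 + Lc^2 / n * (Q - S * S) := by
    field_simp
    ring
  rw [heq]
  have h1 : Q - S * S ≤ ∑ j, p j * a j ^ 2 := by nlinarith [mul_self_nonneg S]
  have h2 : 0 ≤ Lc^2 / n := div_nonneg (sq_nonneg Lc) hn0.le
  have h3 := mul_le_mul_of_nonneg_left h1 h2
  linarith


/-- Maurey argument: If `λ^C` minimizes `λ ↦ ‖f_λ − f‖²_{P_X,2}` over the
ℓ₁-ball of radius 1, then for every integer `s ≥ 1` (and `‖λ^C‖₀ ≥ 1`),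
`inf { ‖f_λ − f‖²_{P_X,2} : ‖λ‖₁ ≤ 1, ‖λ‖₀ ≤ s } ≤
  ‖f_{λ^C} − f‖²_{P_X,2} + ‖λ^C‖₁² / min(s, ‖λ^C‖₀)`. -/
theorem maurey_sparse_approximation
    {X : Type} [MeasurableSpace X]
    (M : ℕ) (PX : Measure X) [IsProbabilityMeasure PX]
    (f : X → ℝ) (hf2 : Integrable (fun x => f x ^ 2) PX)
    (φ : Fin M → X → ℝ)
    (hφ2 : ∀ j, Integrable (fun x => φ j x ^ 2) PX)
    (hφnorm : ∀ j, (∫ x, φ j x ^ 2 ∂PX) = 1)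
    (flam : (Fin M → ℝ) → X → ℝ)
    (hflam : ∀ l x, flam l x = ∑ j, l j * φ j x)
    (hint : ∀ l : Fin M → ℝ, Integrable (fun x => (flam l x - f x) ^ 2) PX)
    (lC : Fin M → ℝ) (hlC1 : (∑ j, |lC j|) ≤ 1)
    (hlCmin : ∀ l : Fin M → ℝ, (∑ j, |l j|) ≤ 1 →
      (∫ x, (flam lC x - f x) ^ 2 ∂PX) ≤ ∫ x, (flam l x - f x) ^ 2 ∂PX)
    (s : ℕ) (hs : 1 ≤ s)
    (h0 : 1 ≤ (Finset.univ.filter fun j => lC j ≠ 0).card) :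
    sInf {r : ℝ | ∃ l : Fin M → ℝ, (∑ j, |l j|) ≤ 1 ∧
        (Finset.univ.filter fun j => l j ≠ 0).card ≤ s ∧
        r = ∫ x, (flam l x - f x) ^ 2 ∂PX} ≤
      (∫ x, (flam lC x - f x) ^ 2 ∂PX) +
        (∑ j, |lC j|) ^ 2 /
          min (s : ℝ) (((Finset.univ.filter fun j => lC j ≠ 0).card : ℕ) : ℝ) := by
  classical
  obtain ⟨j0, hj0⟩ : ∃ j, lC j ≠ 0 := by
    obtain ⟨j0, hj0⟩ := Finset.card_pos.mp h0
    exact ⟨j0, (Finset.mem_filter.mp hj0).2⟩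
  set k := (Finset.univ.filter fun j => lC j ≠ 0).card with hk
  set m := min s k with hm
  have hm1 : 1 ≤ m := le_min hs h0
  have hmR : (0:ℝ) < m := by exact_mod_cast hm1
  set L := ∑ j, |lC j| with hL
  have hL0 : 0 < L := lt_of_lt_of_le (abs_pos.mpr hj0)
    (Finset.single_le_sum (fun j _ => abs_nonneg (lC j)) (Finset.mem_univ j0))
  set p : Fin M → ℝ := fun j => |lC j| / L with hpdef
  have hp : ∀ j, 0 ≤ p j := fun j => div_nonneg (abs_nonneg _) hL0.le
  have hp1 : ∑ j, p j = 1 := by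
    simp only [hpdef]
    rw [← Finset.sum_div, ← hL, div_self hL0.ne']
  set c : Fin M → ℝ := fun j => if lC j = 0 then 0 else lC j / |lC j| with hc
  have hc1 : ∀ j, |c j| ≤ 1 := by
    intro j
    simp only [hc]
    split
    · simp
    · next hne =>
      rw [abs_div, abs_abs, div_self (abs_ne_zero.mpr hne)]
  have hcabs : ∀ j, c j * |lC j| = lC j := by
    intro j
    simp only [hc]
    split
    · next h => simp [h]
    · next hne => exact div_mul_cancel₀ (lC j) (abs_ne_zero.mpr hne)
  have hLne : L ≠ 0 := hL0.ne'
  have hS : ∀ x, L * (∑ j, p j * (c j * φ j x)) = flam lC x := by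
    intro x
    rw [hflam, Finset.mul_sum]
    refine Finset.sum_congr rfl fun j _ => ?_
    simp only [hpdef]
    calc L * (|lC j| / L * (c j * φ j x)) = (L / L) * ((c j * |lC j|) * φ j x) := by ring
      _ = lC j * φ j x := by rw [div_self hLne, hcabs j, one_mul]
  set lhat : (Fin m → Fin M) → Fin M → ℝ :=
    fun ω j => (L / m) * ∑ i, if ω i = j then c j else 0 with hlhat
  have hfl : ∀ (ω : Fin m → Fin M) x,
      flam (lhat ω) x = (L / m) * ∑ i, c (ω i) * φ (ω i) x := by
    intro ω x
    rw [hflam]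
    calc ∑ j, lhat ω j * φ j x
        = ∑ j, ∑ i, (L / m) * (if ω i = j then c j * φ j x else 0) := by
          refine Finset.sum_congr rfl fun j _ => ?_
          simp only [hlhat, mul_assoc, Finset.sum_mul, ite_mul, zero_mul, Finset.mul_sum]
      _ = ∑ i, ∑ j, (L / m) * (if ω i = j then c j * φ j x else 0) := Finset.sum_comm
      _ = (L / m) * ∑ i, c (ω i) * φ (ω i) x := by
          rw [Finset.mul_sum]
          refine Finset.sum_congr rfl fun i _ => ?_
          rw [← Finset.mul_sum,
            Finset.sum_ite_eq Finset.univ (ω i) (fun j => c j * φ j x)]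
          simp
  have hLm0 : 0 ≤ L / (m:ℝ) := div_nonneg hL0.le hmR.le
  have hl1 : ∀ ω : Fin m → Fin M, ∑ j, |lhat ω j| ≤ L := by
    intro ω
    have step : ∀ j, |lhat ω j| ≤ (L / m) * ∑ i, (if ω i = j then (1:ℝ) else 0) := by
      intro j
      simp only [hlhat]
      rw [abs_mul, abs_of_nonneg hLm0]
      refine mul_le_mul_of_nonneg_left ?_ hLm0
      refine (Finset.abs_sum_le_sum_abs _ _).trans (Finset.sum_le_sum fun i _ => ?_)
      split
      · exact hc1 j
      · simp
    calc ∑ j, |lhat ω j| ≤ ∑ j, (L / m) * ∑ i, (if ω i = j then (1:ℝ) else 0) :=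
          Finset.sum_le_sum fun j _ => step j
      _ = (L / m) * ∑ j, ∑ i : Fin m, (if ω i = j then (1:ℝ) else 0) := by
          rw [Finset.mul_sum]
      _ = (L / m) * ∑ i : Fin m, ∑ j, (if ω i = j then (1:ℝ) else 0) := by
          rw [Finset.sum_comm]
      _ = (L / m) * m := by
          congr 1
          rw [Finset.sum_congr rfl fun i _ =>
            (Finset.sum_ite_eq Finset.univ (ω i) (fun _ => (1:ℝ)))]
          simp
      _ = L := div_mul_cancel₀ L hmR.ne'
  have hcard : ∀ ω : Fin m → Fin M,
      (Finset.univ.filter fun j => lhat ω j ≠ 0).card ≤ s := by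
    intro ω
    have hsub : (Finset.univ.filter fun j => lhat ω j ≠ 0) ⊆ Finset.univ.image ω := by
      intro j hj
      have hj' : lhat ω j ≠ 0 := (Finset.mem_filter.mp hj).2
      have hsum : (∑ i, if ω i = j then c j else 0) ≠ 0 := by
        intro h'
        apply hj'
        simp only [hlhat, h', mul_zero]
      obtain ⟨i, _, hi⟩ := Finset.exists_ne_zero_of_sum_ne_zero hsum
      have hij : ω i = j := by
        by_contra hq
        exact hi (if_neg hq)
      exact Finset.mem_image.mpr ⟨i, Finset.mem_univ i, hij⟩
    calc (Finset.univ.filter fun j => lhat ω j ≠ 0).card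
        ≤ (Finset.univ.image ω).card := Finset.card_le_card hsub
      _ ≤ (Finset.univ : Finset (Fin m)).card := Finset.card_image_le
      _ = m := by simp
      _ ≤ s := by rw [hm]; exact min_le_left s k
  set w : (Fin m → Fin M) → ℝ := fun ω => ∏ i, p (ω i) with hwdef
  have hw0 : ∀ ω, 0 ≤ w ω := fun ω => Finset.prod_nonneg fun i _ => hp _
  have hw1 : ∑ ω : Fin m → Fin M, w ω = 1 := by
    simp only [hwdef]
    rw [sum_prod_pi (fun _ j => p j)]
    simp [hp1]
  have hpt : ∀ x, ∑ ω : Fin m → Fin M, w ω * (flam (lhat ω) x - f x) ^ 2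
      ≤ (flam lC x - f x) ^ 2 + L ^ 2 / m * ∑ j, p j * (φ j x) ^ 2 := by
    intro x
    have hhj : ∀ j, (c j * φ j x) ^ 2 ≤ (φ j x) ^ 2 := by
      intro j
      have h1 : c j ^ 2 ≤ 1 := by nlinarith [hc1 j, abs_nonneg (c j), sq_abs (c j)]
      nlinarith [sq_nonneg (φ j x)]
    have key := maurey_expectation (n := m) hm1 p hp hp1
      (fun j => c j * φ j x) (fun j => φ j x) hhj (f x) L
    calc ∑ ω : Fin m → Fin M, w ω * (flam (lhat ω) x - f x) ^ 2
        = ∑ ω : Fin m → Fin M,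
            (∏ i, p (ω i)) * ((L / m) * (∑ i, c (ω i) * φ (ω i) x) - f x) ^ 2 := by
          refine Finset.sum_congr rfl fun ω _ => ?_
          rw [hfl ω x]
      _ ≤ (L * (∑ j, p j * (c j * φ j x)) - f x) ^ 2
            + L ^ 2 / m * ∑ j, p j * (φ j x) ^ 2 := key
      _ = (flam lC x - f x) ^ 2 + L ^ 2 / m * ∑ j, p j * (φ j x) ^ 2 := by
          rw [hS x]
  have iLC := hint lC
  have iphi : Integrable (fun x => ∑ j, p j * (φ j x) ^ 2) PX :=
    integrable_finset_sum _ fun j _ => (hφ2 j).const_mul (p j)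
  have iRHS : Integrable
      (fun x => (flam lC x - f x) ^ 2 + L ^ 2 / m * ∑ j, p j * (φ j x) ^ 2) PX :=
    iLC.add (iphi.const_mul _)
  have iLHS : Integrable
      (fun x => ∑ ω : Fin m → Fin M, w ω * (flam (lhat ω) x - f x) ^ 2) PX :=
    integrable_finset_sum _ fun ω _ => (hint (lhat ω)).const_mul (w ω)
  have hEbound : ∑ ω : Fin m → Fin M, w ω * ∫ x, (flam (lhat ω) x - f x) ^ 2 ∂PX
      ≤ (∫ x, (flam lC x - f x) ^ 2 ∂PX) + L ^ 2 / m := by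
    have swap : ∑ ω : Fin m → Fin M, w ω * ∫ x, (flam (lhat ω) x - f x) ^ 2 ∂PX
        = ∫ x, ∑ ω : Fin m → Fin M, w ω * (flam (lhat ω) x - f x) ^ 2 ∂PX := by
      rw [integral_finset_sum _ fun ω _ => ((hint (lhat ω)).const_mul (w ω))]
      exact Finset.sum_congr rfl fun ω _ => (integral_const_mul (w ω) _).symm
    rw [swap]
    refine (integral_mono iLHS iRHS hpt).trans ?_
    rw [integral_add iLC (iphi.const_mul _), integral_const_mul,
      integral_finset_sum _ (fun j _ => (hφ2 j).const_mul (p j))]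
    have hone : ∑ j, ∫ x, p j * (φ j x) ^ 2 ∂PX = 1 := by
      have e : ∀ j : Fin M, ∫ x, p j * (φ j x) ^ 2 ∂PX = p j := by
        intro j
        rw [integral_const_mul, hφnorm j, mul_one]
      rw [Finset.sum_congr rfl fun j _ => e j, hp1]
    rw [hone, mul_one]
  have hex : ∃ ω : Fin m → Fin M, ∫ x, (flam (lhat ω) x - f x) ^ 2 ∂PX
      ≤ (∫ x, (flam lC x - f x) ^ 2 ∂PX) + L ^ 2 / m := by
    by_contra hcon
    push_neg at hcon
    obtain ⟨ω1, hω1⟩ : ∃ ω : Fin m → Fin M, 0 < w ω := by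
      by_contra hall
      push_neg at hall
      have hz : ∑ ω : Fin m → Fin M, w ω = 0 :=
        le_antisymm (Finset.sum_nonpos fun ω _ => hall ω)
          (Finset.sum_nonneg fun ω _ => hw0 ω)
      rw [hw1] at hz
      norm_num at hz
    have hlt : ∑ ω : Fin m → Fin M,
        w ω * ((∫ x, (flam lC x - f x) ^ 2 ∂PX) + L ^ 2 / m)
        < ∑ ω : Fin m → Fin M, w ω * ∫ x, (flam (lhat ω) x - f x) ^ 2 ∂PX := by
      refine Finset.sum_lt_sum
        (fun ω _ => mul_le_mul_of_nonneg_left (hcon ω).le (hw0 ω))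
        ⟨ω1, Finset.mem_univ ω1, mul_lt_mul_of_pos_left (hcon ω1) hω1⟩
    rw [← Finset.sum_mul, hw1, one_mul] at hlt
    exact absurd hEbound (not_le.mpr hlt)
  obtain ⟨ω0, hω0⟩ := hex
  have hbdd : BddBelow {r : ℝ | ∃ l : Fin M → ℝ, (∑ j, |l j|) ≤ 1 ∧
      (Finset.univ.filter fun j => l j ≠ 0).card ≤ s ∧
      r = ∫ x, (flam l x - f x) ^ 2 ∂PX} := by
    refine ⟨0, fun r hr => ?_⟩
    obtain ⟨l, _, _, rfl⟩ := hr
    exact integral_nonneg fun x => sq_nonneg _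
  have hmem : (∫ x, (flam (lhat ω0) x - f x) ^ 2 ∂PX) ∈
      {r : ℝ | ∃ l : Fin M → ℝ, (∑ j, |l j|) ≤ 1 ∧
        (Finset.univ.filter fun j => l j ≠ 0).card ≤ s ∧
        r = ∫ x, (flam l x - f x) ^ 2 ∂PX} :=
    ⟨lhat ω0, (hl1 ω0).trans hlC1, hcard ω0, rfl⟩
  have hmin : ((m : ℕ) : ℝ) = min (s : ℝ) ((k : ℕ) : ℝ) := by
    rw [hm]
    push_cast
    rfl
  refine (csInf_le hbdd hmem).trans (hω0.trans ?_)
  rw [hmin]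
end

section
/- In the binary classification model, let Φ : ℝ → [0,∞) be convex and twice continuously differentiable with β_Φ := sup_{|u| ≤ RL_φ} Φ′(u)²/Φ″(u) < ∞ (with the convention 0/0 = 0), and assume max_j ‖φ_j‖_{P_X,∞} ≤ L_φ. Then for every β ≥ β_Φ and every fixed g̃ ∈ ℱ_Λ, the map g ↦ ∫_{𝒳×{±1}} exp( −β⁻¹{ Φ(−y g(x)) − Φ(−y g̃(x)) } ) P(dx,dy) is concave on the convex set ℱ_Λ; in particular Assumption Q2 holds with Ψ_β(g,g̃) equal to this integral. -/
open MeasureTheory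

lemma exp_neg_loss_concave {Φ : ℝ → ℝ} (hΦsmooth : ContDiff ℝ 2 Φ) {β c : ℝ} (hβ : 0 < β)
    (hβΦ : ∀ u : ℝ, |u| ≤ c → deriv Φ u ^ 2 ≤ β * deriv (deriv Φ) u) :
    ConcaveOn ℝ (Set.Icc (-c) c) (fun t => Real.exp (-Φ t / β)) := by
  have hΦd : Differentiable ℝ Φ := hΦsmooth.differentiable (by norm_num)
  have h2 : ContDiff ℝ ((1 : WithTop ℕ∞) + 1) Φ := by
    convert hΦsmooth using 2
    rfl
  have hΦ'cd : ContDiff ℝ 1 (deriv Φ) := (contDiff_succ_iff_deriv.mp h2).2.2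
  have hΦ'd : Differentiable ℝ (deriv Φ) := hΦ'cd.differentiable one_ne_zero
  set h : ℝ → ℝ := fun t => Real.exp (-Φ t / β) with hh
  have hd : ∀ t, HasDerivAt h (Real.exp (-Φ t / β) * (-(deriv Φ t) / β)) t := fun t =>
    (((hΦd t).hasDerivAt.neg).div_const β).exp
  have hderiv : deriv h = fun t => Real.exp (-Φ t / β) * (-(deriv Φ t) / β) :=
    funext fun t => (hd t).deriv
  have hd2 : ∀ t, HasDerivAt (deriv h)
      ((Real.exp (-Φ t / β) * (-(deriv Φ t) / β)) * (-(deriv Φ t) / β)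
        + Real.exp (-Φ t / β) * (-(deriv (deriv Φ) t) / β)) t := by
    intro t
    rw [hderiv]
    exact (hd t).mul (((hΦ'd t).hasDerivAt.neg).div_const β)
  apply concaveOn_of_deriv2_nonpos' (convex_Icc _ _)
  · exact fun t _ => ((hd t).differentiableAt.differentiableWithinAt)
  · exact fun t _ => ((hd2 t).differentiableAt.differentiableWithinAt)
  · intro t ht
    have habs : |t| ≤ c := abs_le.mpr ⟨ht.1, ht.2⟩
    have hkey := hβΦ t habs
    have : deriv^[2] h t = (Real.exp (-Φ t / β) * (-(deriv Φ t) / β)) * (-(deriv Φ t) / β)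
        + Real.exp (-Φ t / β) * (-(deriv (deriv Φ) t) / β) := by
      rw [show (2 : ℕ) = 1 + 1 from rfl, Function.iterate_succ, Function.iterate_one,
        Function.comp_apply]
      exact (hd2 t).deriv
    rw [this]
    have he : 0 < Real.exp (-Φ t / β) := Real.exp_pos _
    have hb2 : 0 < β ^ 2 := by positivity
    have heq : Real.exp (-Φ t / β) * (-deriv Φ t / β) * (-deriv Φ t / β)
        + Real.exp (-Φ t / β) * (-deriv (deriv Φ) t / β)
        = Real.exp (-Φ t / β) * ((deriv Φ t ^ 2 - β * deriv (deriv Φ) t) / β ^ 2) := by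
      field_simp; ring
    rw [heq]
    have h3 : deriv Φ t ^ 2 - β * deriv (deriv Φ) t ≤ 0 := by linarith
    exact mul_nonpos_of_nonneg_of_nonpos he.le
      (div_nonpos_of_nonpos_of_nonneg h3 hb2.le)

/-- In binary classification with a smooth convex loss `Φ` such that
`β ≥ β_Φ := sup_{|u| ≤ RL_φ} Φ′(u)²/Φ″(u)` (convention 0/0 = 0; encoded by
`Φ′(u)² ≤ β Φ″(u)` on `|u| ≤ RL_φ`), for every fixed `g̃ ∈ ℱ_Λ` the map
`g ↦ ∫ exp(−β⁻¹{Φ(−y g(x)) − Φ(−y g̃(x))}) P(dx,dy)` is concave on `ℱ_Λ`; in particular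
Assumption Q2 holds with `Ψ_β(g,g̃)` equal to this integral. -/
theorem classification_Q2_concavity
    {X : Type} [MeasurableSpace X]
    (M : ℕ) (R : ℝ) (hRpos : 0 < R)
    (P : Measure (X × ℝ)) [IsProbabilityMeasure P]
    (hlabels : ∀ᵐ z ∂P, z.2 = 1 ∨ z.2 = -1)
    (PX : Measure X) (hPX : PX = P.map Prod.fst)
    (φ : Fin M → X → ℝ) (hφmeas : ∀ j, Measurable (φ j))
    (Lφ : ℝ) (hLφ : 0 < Lφ)
    (hφbound : ∀ j, ∀ᵐ x ∂PX, |φ j x| ≤ Lφ)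
    (flam : (Fin M → ℝ) → X → ℝ)
    (hflam : ∀ (l : Fin M → ℝ) (x : X), flam l x = ∑ j, l j * φ j x)
    -- the convex dictionary class ℱ_Λ
    (FΛ : Set (X → ℝ))
    (hFΛ : FΛ = {g | ∃ l : Fin M → ℝ, (∑ j, |l j|) ≤ R ∧ g = flam l})
    -- the loss Φ
    (Φ : ℝ → ℝ) (hΦnn : ∀ u, 0 ≤ Φ u) (hΦconv : ConvexOn ℝ Set.univ Φ)
    (hΦsmooth : ContDiff ℝ 2 Φ)
    (β : ℝ) (hβpos : 0 < β)
    (hβΦ : ∀ u : ℝ, |u| ≤ R * Lφ → deriv Φ u ^ 2 ≤ β * deriv (deriv Φ) u)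
    (Ψ : (X → ℝ) → (X → ℝ) → ℝ)
    (hΨ : ∀ g g' : X → ℝ, Ψ g g' =
      ∫ z, Real.exp (-(Φ (-z.2 * g z.1) - Φ (-z.2 * g' z.1)) / β) ∂P) :
    (∀ g' ∈ FΛ, ConcaveOn ℝ FΛ fun g => Ψ g g') ∧
    (∀ g ∈ FΛ, Ψ g g = 1) ∧
    (∀ g ∈ FΛ, ∀ g' ∈ FΛ,
      (∫ z, Real.exp (-(Φ (-z.2 * g z.1) - Φ (-z.2 * g' z.1)) / β) ∂P) ≤ Ψ g g') := by
  set c := R * Lφ with hc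
  have hcpos : 0 < c := mul_pos hRpos hLφ
  -- basic a.e. bound on the dictionary under P
  have hbound_P : ∀ᵐ z ∂P, ∀ j, |φ j z.1| ≤ Lφ := by
    rw [ae_all_iff]
    intro j
    have hs : MeasurableSet {x : X | |φ j x| ≤ Lφ} :=
      measurableSet_le (hφmeas j).abs measurable_const
    have := hφbound j
    rw [hPX, ae_map_iff measurable_fst.aemeasurable hs] at this
    exact this
  -- measurability of members
  have hmeasl : ∀ l : Fin M → ℝ, Measurable (flam l) := by
    intro l
    have : flam l = fun x => ∑ j, l j * φ j x := funext (hflam l)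
    rw [this]
    exact Finset.measurable_sum _ fun j _ => (hφmeas j).const_mul _
  -- a.e. bound for members
  have hgb : ∀ l : Fin M → ℝ, (∑ j, |l j|) ≤ R → ∀ᵐ z ∂P, |flam l z.1| ≤ c := by
    intro l hl
    filter_upwards [hbound_P] with z hz
    rw [hflam]
    calc |∑ j, l j * φ j z.1| ≤ ∑ j, |l j * φ j z.1| := Finset.abs_sum_le_sum_abs _ _
      _ ≤ ∑ j, |l j| * Lφ := by
          refine Finset.sum_le_sum fun j _ => ?_
          rw [abs_mul]
          exact mul_le_mul_of_nonneg_left (hz j) (abs_nonneg _)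
      _ = (∑ j, |l j|) * Lφ := by rw [Finset.sum_mul]
      _ ≤ R * Lφ := mul_le_mul_of_nonneg_right hl hLφ.le
  have hmem : ∀ g ∈ FΛ, Measurable g ∧ (∀ᵐ z ∂P, |g z.1| ≤ c) := by
    rw [hFΛ]
    rintro g ⟨l, hl, rfl⟩
    exact ⟨hmeasl l, hgb l hl⟩
  -- max of Φ on the relevant interval
  obtain ⟨u0, hu0mem, hu0⟩ := (isCompact_Icc (a := -c) (b := c)).exists_isMaxOn
    ⟨0, by constructor <;> [linarith; linarith]⟩ (hΦsmooth.continuous.continuousOn)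
  set C := Φ u0 with hC
  have hCb : ∀ u : ℝ, |u| ≤ c → Φ u ≤ C := fun u hu =>
    hu0 (abs_le.mp hu |> fun h => ⟨h.1, h.2⟩)
  -- measurability of the integrand
  have hintmeas : ∀ g g' : X → ℝ, Measurable g → Measurable g' →
      Measurable (fun z : X × ℝ =>
        Real.exp (-(Φ (-z.2 * g z.1) - Φ (-z.2 * g' z.1)) / β)) := by
    intro g g' hg hg'
    have m1 : Measurable fun z : X × ℝ => Φ (-z.2 * g z.1) :=
      hΦsmooth.continuous.measurable.comp (measurable_snd.neg.mul (hg.comp measurable_fst))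
    have m2 : Measurable fun z : X × ℝ => Φ (-z.2 * g' z.1) :=
      hΦsmooth.continuous.measurable.comp (measurable_snd.neg.mul (hg'.comp measurable_fst))
    exact Real.continuous_exp.measurable.comp (((m1.sub m2).neg).div_const β)
  -- integrability of the integrand
  have hInt : ∀ g ∈ FΛ, ∀ g' ∈ FΛ, Integrable (fun z : X × ℝ =>
      Real.exp (-(Φ (-z.2 * g z.1) - Φ (-z.2 * g' z.1)) / β)) P := by
    intro g hg g' hg'
    obtain ⟨hgm, hgbd⟩ := hmem g hg
    obtain ⟨hg'm, hg'bd⟩ := hmem g' hg'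
    refine Integrable.mono' (integrable_const (Real.exp (C / β)))
      ((hintmeas g g' hgm hg'm).aestronglyMeasurable) ?_
    filter_upwards [hlabels, hg'bd] with z hy hb'
    have hyabs : |z.2| = 1 := by rcases hy with h | h <;> simp [h]
    have hb2 : |(-z.2) * g' z.1| ≤ c := by
      rw [abs_mul, abs_neg, hyabs, one_mul]; exact hb'
    have h1 : -(Φ (-z.2 * g z.1) - Φ (-z.2 * g' z.1)) / β ≤ C / β := by
      have hA := hΦnn (-z.2 * g z.1)
      have hB := hCb _ hb2
      gcongr
      linarith
    rw [Real.norm_eq_abs, abs_of_pos (Real.exp_pos _)]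
    exact Real.exp_le_exp.mpr h1
  -- concavity of t ↦ exp(-Φ t / β) on [-c, c]
  have hconc : ConcaveOn ℝ (Set.Icc (-c) c) (fun t => Real.exp (-Φ t / β)) :=
    exp_neg_loss_concave hΦsmooth hβpos hβΦ
  -- convexity of the class
  have hFconv : Convex ℝ FΛ := by
    rw [hFΛ]
    rintro g₁ ⟨l₁, hl₁, rfl⟩ g₂ ⟨l₂, hl₂, rfl⟩ a b ha hb hab
    refine ⟨a • l₁ + b • l₂, ?_, ?_⟩
    · have hterm : ∀ j, |(a • l₁ + b • l₂) j| ≤ a * |l₁ j| + b * |l₂ j| := by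
        intro j
        simp only [Pi.add_apply, Pi.smul_apply, smul_eq_mul]
        refine (abs_add_le _ _).trans ?_
        rw [abs_mul, abs_mul, abs_of_nonneg ha, abs_of_nonneg hb]
      have h1 : ∑ j, |(a • l₁ + b • l₂) j| ≤ ∑ j, (a * |l₁ j| + b * |l₂ j|) :=
        Finset.sum_le_sum fun j _ => hterm j
      have h2 : ∑ j, (a * |l₁ j| + b * |l₂ j|)
          = a * (∑ j, |l₁ j|) + b * (∑ j, |l₂ j|) := by
        rw [Finset.sum_add_distrib, ← Finset.mul_sum, ← Finset.mul_sum]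
      have h3 : a * (∑ j, |l₁ j|) ≤ a * R := mul_le_mul_of_nonneg_left hl₁ ha
      have h4 : b * (∑ j, |l₂ j|) ≤ b * R := mul_le_mul_of_nonneg_left hl₂ hb
      have h5 : a * R + b * R = R := by rw [← add_mul, hab, one_mul]
      linarith
    · funext x
      rw [Pi.add_apply, Pi.smul_apply, Pi.smul_apply, hflam, hflam, hflam, smul_eq_mul,
        smul_eq_mul, Finset.mul_sum, Finset.mul_sum, ← Finset.sum_add_distrib]
      exact Finset.sum_congr rfl fun j _ => by
        rw [Pi.add_apply, Pi.smul_apply, Pi.smul_apply, smul_eq_mul, smul_eq_mul]; ring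
  refine ⟨?_, ?_, ?_⟩
  · -- concavity
    intro g' hg'
    refine ⟨hFconv, ?_⟩
    intro g₁ hg₁ g₂ hg₂ a b ha hb hab
    have hgmem : a • g₁ + b • g₂ ∈ FΛ := hFconv hg₁ hg₂ ha hb hab
    simp only [hΨ]
    have I1 := hInt g₁ hg₁ g' hg'
    have I2 := hInt g₂ hg₂ g' hg'
    have Ig := hInt _ hgmem g' hg'
    have hsum : ∫ z, (a * Real.exp (-(Φ (-z.2 * g₁ z.1) - Φ (-z.2 * g' z.1)) / β)
            + b * Real.exp (-(Φ (-z.2 * g₂ z.1) - Φ (-z.2 * g' z.1)) / β)) ∂P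
        = a * (∫ z, Real.exp (-(Φ (-z.2 * g₁ z.1) - Φ (-z.2 * g' z.1)) / β) ∂P)
          + b * (∫ z, Real.exp (-(Φ (-z.2 * g₂ z.1) - Φ (-z.2 * g' z.1)) / β) ∂P) := by
      rw [integral_add (I1.const_mul a) (I2.const_mul b), integral_const_mul,
        integral_const_mul]
    simp only [smul_eq_mul]
    rw [← hsum]
    refine integral_mono_ae ((I1.const_mul a).add (I2.const_mul b)) Ig ?_
    filter_upwards [hlabels, (hmem g₁ hg₁).2, (hmem g₂ hg₂).2] with z hy h1 h2
    have hyabs : |z.2| = 1 := by rcases hy with h | h <;> simp [h]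
    have hm1 : -z.2 * g₁ z.1 ∈ Set.Icc (-c) c := by
      have : |(-z.2) * g₁ z.1| ≤ c := by rw [abs_mul, abs_neg, hyabs, one_mul]; exact h1
      exact ⟨(abs_le.mp this).1, (abs_le.mp this).2⟩
    have hm2 : -z.2 * g₂ z.1 ∈ Set.Icc (-c) c := by
      have : |(-z.2) * g₂ z.1| ≤ c := by rw [abs_mul, abs_neg, hyabs, one_mul]; exact h2
      exact ⟨(abs_le.mp this).1, (abs_le.mp this).2⟩
    have hcc := hconc.2 hm1 hm2 ha hb hab
    simp only [smul_eq_mul] at hcc ⊢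
    have key : ∀ A B : ℝ, Real.exp (-(A - B) / β) = Real.exp (-A / β) * Real.exp (B / β) := by
      intro A B
      rw [← Real.exp_add]
      ring_nf
    have hrw : -z.2 * (a • g₁ + b • g₂) z.1 = a * (-z.2 * g₁ z.1) + b * (-z.2 * g₂ z.1) := by
      simp only [Pi.add_apply, Pi.smul_apply, smul_eq_mul]; ring
    rw [key, key, key, hrw]
    have hw : 0 ≤ Real.exp (Φ (-z.2 * g' z.1) / β) := (Real.exp_pos _).le
    calc a * (Real.exp (-Φ (-z.2 * g₁ z.1) / β) * Real.exp (Φ (-z.2 * g' z.1) / β))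
          + b * (Real.exp (-Φ (-z.2 * g₂ z.1) / β) * Real.exp (Φ (-z.2 * g' z.1) / β))
        = (a * Real.exp (-Φ (-z.2 * g₁ z.1) / β) + b * Real.exp (-Φ (-z.2 * g₂ z.1) / β))
            * Real.exp (Φ (-z.2 * g' z.1) / β) := by ring
      _ ≤ Real.exp (-Φ (a * (-z.2 * g₁ z.1) + b * (-z.2 * g₂ z.1)) / β)
            * Real.exp (Φ (-z.2 * g' z.1) / β) := mul_le_mul_of_nonneg_right hcc hw
  · -- Ψ g g = 1
    intro g hg
    rw [hΨ]
    simp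
  · -- the integral inequality (equality)
    intro g hg g' hg'
    rw [hΨ]
end

section
/- Let M ≥ 2 be an integer, τ > 0 and λ* ∈ ℝ^M, and let p₀ be the probability measure on ℝ^M with Lebesgue density proportional to ∏_{j=1}^M (τ² + (λ_j − λ*_j)²)^{-2} on the set {λ : ‖λ − λ*‖₁ ≤ 2Mτ} and zero elsewhere. Then ∫_{ℝ^M} (λ₁ − λ*₁)² p₀(dλ) ≤ 4τ². -/
set_option maxHeartbeats 1000000

open MeasureTheory
open scoped ENNReal


lemma hasDerivAt_G (τ : ℝ) (hτ : 0 < τ) (u : ℝ) :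
    HasDerivAt (fun u => (3/(2*τ)) * Real.arctan (u/τ) + 5*u/(2*(τ^2+u^2)))
      ((4*τ^2 - u^2) * ((τ^2+u^2)^2)⁻¹) u := by
  have hτ0 : τ ≠ 0 := hτ.ne'
  have hτ2 : τ^2 + u^2 ≠ 0 := by positivity
  have h1 : HasDerivAt (fun u : ℝ => Real.arctan (u/τ)) ((1/(1+(u/τ)^2)) * (1/τ)) u := by
    have := (Real.hasDerivAt_arctan (u/τ)).comp u ((hasDerivAt_id u).div_const τ)
    simpa [one_div, Function.comp_def] using this
  have hden : HasDerivAt (fun u : ℝ => 2*(τ^2+u^2)) (2*(2*u^1)) u :=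
    ((hasDerivAt_pow 2 u).const_add (τ^2)).const_mul 2
  have hnum : HasDerivAt (fun u : ℝ => 5*u) (5*1) u := (hasDerivAt_id u).const_mul 5
  have h2 : HasDerivAt (fun u : ℝ => 5*u/(2*(τ^2+u^2)))
      ((5*1*(2*(τ^2+u^2)) - 5*u*(2*(2*u^1)))/(2*(τ^2+u^2))^2) u :=
    hnum.div hden (by positivity)
  have := (h1.const_mul (3/(2*τ))).add h2
  refine this.congr_deriv ?_
  have h3 : 1 + (u/τ)^2 ≠ 0 := by positivity
  field_simp
  ring

lemma oneD_real (τ B K : ℝ) (hτ : 0 < τ) (hK : 0 ≤ K) (hB : 0 ≤ B) :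
    0 ≤ ∫ u in (-B)..B, (4*τ^2 - u^2) * (K * ((τ^2+u^2)^2)⁻¹) := by
  have hcont : Continuous (fun u : ℝ => (4*τ^2 - u^2) * (K * ((τ^2+u^2)^2)⁻¹)) := by
    apply Continuous.mul (by continuity)
    apply Continuous.mul continuous_const
    exact ((continuous_const.add (continuous_pow 2)).pow 2).inv₀ (fun u => by simp only [Pi.pow_apply, Pi.add_apply]; positivity)
  have hftc : ∫ u in (-B)..B, (4*τ^2 - u^2) * (K * ((τ^2+u^2)^2)⁻¹)
      = (K * ((3/(2*τ)) * Real.arctan (B/τ) + 5*B/(2*(τ^2+B^2))))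
        - (K * ((3/(2*τ)) * Real.arctan ((-B)/τ) + 5*(-B)/(2*(τ^2+(-B)^2)))) := by
    apply intervalIntegral.integral_eq_sub_of_hasDerivAt
    · intro u hu
      have := (hasDerivAt_G τ hτ u).const_mul K
      refine this.congr_deriv ?_
      ring
    · exact hcont.intervalIntegrable _ _
  rw [hftc]
  have h1 : 0 ≤ Real.arctan (B/τ) := by
    rw [← Real.arctan_zero]
    exact Real.arctan_strictMono.monotone (by positivity)
  have h2 : Real.arctan ((-B)/τ) = - Real.arctan (B/τ) := by
    rw [neg_div, Real.arctan_neg]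
  rw [h2]
  have hb2 : 0 < τ^2 + B^2 := by positivity
  have hb2' : τ^2 + (-B)^2 = τ^2 + B^2 := by ring
  rw [hb2']
  have hx : 0 ≤ (3/(2*τ)) * Real.arctan (B/τ) + 5*B/(2*(τ^2+B^2)) := by positivity
  have e : K * (3 / (2 * τ) * Real.arctan (B / τ) + 5 * B / (2 * (τ ^ 2 + B ^ 2))) -
      K * (3 / (2 * τ) * -Real.arctan (B / τ) + 5 * -B / (2 * (τ ^ 2 + B ^ 2)))
      = 2 * (K * (3 / (2 * τ) * Real.arctan (B / τ) + 5 * B / (2 * (τ ^ 2 + B ^ 2)))) := by ring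
  rw [e]
  have := mul_nonneg hK hx
  linarith

lemma oneD_lintegral (τ a s T K : ℝ) (hτ : 0 < τ) (hK : 0 ≤ K) :
    ∫⁻ x : ℝ, ENNReal.ofReal ((if |x - a| + s ≤ T then K * ((τ^2+(x-a)^2)^2)⁻¹ else 0) * (x-a)^2)
      ≤ ENNReal.ofReal (4*τ^2) *
        ∫⁻ x : ℝ, ENNReal.ofReal (if |x - a| + s ≤ T then K * ((τ^2+(x-a)^2)^2)⁻¹ else 0) := by
  set B := T - s with hBdef
  by_cases hB : B < 0
  · have hfalse : ∀ x : ℝ, ¬(|x - a| + s ≤ T) := by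
      intro x h
      have := abs_nonneg (x - a)
      simp only [hBdef] at hB
      linarith
    simp [hfalse]
  push_neg at hB
  have hcond : ∀ x : ℝ, (|x - a| + s ≤ T) ↔ x ∈ Set.Icc (a - B) (a + B) := by
    intro x
    rw [Set.mem_Icc]
    constructor
    · intro h
      have h2 : |x - a| ≤ B := by simp only [hBdef]; linarith
      rw [abs_le] at h2
      constructor <;> linarith [h2.1, h2.2]
    · intro ⟨h1, h2⟩
      have : |x - a| ≤ B := by rw [abs_le]; constructor <;> linarith
      simp only [hBdef] at this
      linarith
  have hq : Continuous (fun u : ℝ => K * ((τ^2+u^2)^2)⁻¹) := by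
    apply Continuous.mul continuous_const
    exact (((continuous_const.add (continuous_pow 2)).pow 2)).inv₀ (fun u => by simp only [Pi.pow_apply, Pi.add_apply]; positivity)
  have hqa : Continuous (fun x : ℝ => K * ((τ^2+(x-a)^2)^2)⁻¹) := by
    have h1 : Continuous (fun x : ℝ => x - a) := continuous_id.sub continuous_const
    exact hq.comp h1
  have hq_nn : ∀ u : ℝ, 0 ≤ K * ((τ^2+u^2)^2)⁻¹ := fun u => by positivity
  -- rewrite as indicator integrals
  have L1 : (fun x : ℝ => ENNReal.ofReal ((if |x - a| + s ≤ T then K * ((τ^2+(x-a)^2)^2)⁻¹ else 0) * (x-a)^2))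
      = (Set.Icc (a-B) (a+B)).indicator
        (fun x => ENNReal.ofReal (K * ((τ^2+(x-a)^2)^2)⁻¹ * (x-a)^2)) := by
    funext x
    by_cases h : x ∈ Set.Icc (a-B) (a+B)
    · rw [Set.indicator_of_mem h, if_pos ((hcond x).2 h)]
    · rw [Set.indicator_of_notMem h, if_neg (fun hh => h ((hcond x).1 hh))]
      simp
  have L2 : (fun x : ℝ => ENNReal.ofReal (if |x - a| + s ≤ T then K * ((τ^2+(x-a)^2)^2)⁻¹ else 0))
      = (Set.Icc (a-B) (a+B)).indicator
        (fun x => ENNReal.ofReal (K * ((τ^2+(x-a)^2)^2)⁻¹)) := by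
    funext x
    by_cases h : x ∈ Set.Icc (a-B) (a+B)
    · rw [Set.indicator_of_mem h, if_pos ((hcond x).2 h)]
    · rw [Set.indicator_of_notMem h, if_neg (fun hh => h ((hcond x).1 hh))]
      simp
  have E1 : lintegral volume ((Set.Icc (a-B) (a+B)).indicator
        (fun x => ENNReal.ofReal (K * ((τ^2+(x-a)^2)^2)⁻¹ * (x-a)^2)))
      = ∫⁻ x in Set.Icc (a-B) (a+B), ENNReal.ofReal (K * ((τ^2+(x-a)^2)^2)⁻¹ * (x-a)^2) :=
    by exact lintegral_indicator measurableSet_Icc _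
  have E2 : lintegral volume ((Set.Icc (a-B) (a+B)).indicator
        (fun x => ENNReal.ofReal (K * ((τ^2+(x-a)^2)^2)⁻¹)))
      = ∫⁻ x in Set.Icc (a-B) (a+B), ENNReal.ofReal (K * ((τ^2+(x-a)^2)^2)⁻¹) :=
    by exact lintegral_indicator measurableSet_Icc _
  rw [L1, L2, E1, E2]
  have int1 : IntegrableOn (fun x : ℝ => K * ((τ^2+(x-a)^2)^2)⁻¹ * (x-a)^2) (Set.Icc (a-B) (a+B)) volume :=
    (hqa.mul (by continuity)).integrableOn_Icc
  have int2 : IntegrableOn (fun x : ℝ => K * ((τ^2+(x-a)^2)^2)⁻¹) (Set.Icc (a-B) (a+B)) volume :=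
    hqa.integrableOn_Icc
  rw [← ofReal_integral_eq_lintegral_ofReal int1
      (Filter.Eventually.of_forall fun x => by positivity),
    ← ofReal_integral_eq_lintegral_ofReal int2
      (Filter.Eventually.of_forall fun x => by positivity),
    ← ENNReal.ofReal_mul (by positivity)]
  apply ENNReal.ofReal_le_ofReal
  have hle : a - B ≤ a + B := by linarith
  rw [MeasureTheory.integral_Icc_eq_integral_Ioc, MeasureTheory.integral_Icc_eq_integral_Ioc,
    ← intervalIntegral.integral_of_le hle, ← intervalIntegral.integral_of_le hle]
  have A1 : (∫ x in (a-B)..(a+B), K * ((τ^2+(x-a)^2)^2)⁻¹ * (x-a)^2)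
      = ∫ u in (-B)..B, K * ((τ^2+u^2)^2)⁻¹ * u^2 := by
    have := intervalIntegral.integral_comp_sub_right
      (a := a-B) (b := a+B) (fun u => K * ((τ^2+u^2)^2)⁻¹ * u^2) a
    simpa [show a - B - a = -B by ring, show a + B - a = B by ring] using this
  have A2 : (∫ x in (a-B)..(a+B), K * ((τ^2+(x-a)^2)^2)⁻¹)
      = ∫ u in (-B)..B, K * ((τ^2+u^2)^2)⁻¹ := by
    have := intervalIntegral.integral_comp_sub_right
      (a := a-B) (b := a+B) (fun u => K * ((τ^2+u^2)^2)⁻¹) a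
    simpa [show a - B - a = -B by ring, show a + B - a = B by ring] using this
  rw [A1, A2]
  have ic1 : IntervalIntegrable (fun u : ℝ => 4*τ^2 * (K * ((τ^2+u^2)^2)⁻¹)) volume (-B) B :=
    (continuous_const.mul hq).intervalIntegrable _ _
  have ic2 : IntervalIntegrable (fun u : ℝ => K * ((τ^2+u^2)^2)⁻¹ * u^2) volume (-B) B :=
    (hq.mul (continuous_pow 2)).intervalIntegrable _ _
  have key : (∫ u in (-B)..B, (4*τ^2 - u^2) * (K * ((τ^2+u^2)^2)⁻¹))
      = 4*τ^2 * (∫ u in (-B)..B, K * ((τ^2+u^2)^2)⁻¹)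
        - ∫ u in (-B)..B, K * ((τ^2+u^2)^2)⁻¹ * u^2 := by
    rw [← intervalIntegral.integral_const_mul, ← intervalIntegral.integral_sub ic1 ic2]
    apply intervalIntegral.integral_congr
    intro u _
    ring
  have h0 := oneD_real τ B K hτ hK hB
  linarith

/-- Lemma 2: Let `M ≥ 2`, `τ > 0`, `λ* ∈ ℝ^M`, and let `p₀` be the probability
measure on `ℝ^M` with Lebesgue density proportional to `∏_j (τ² + (λ_j − λ*_j)²)^{-2}` on
`{λ : ‖λ − λ*‖₁ ≤ 2Mτ}` and zero elsewhere.  Then `∫ (λ₁ − λ*₁)² p₀(dλ) ≤ 4τ²`. -/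
theorem translated_prior_second_moment
    (M : ℕ) (hM : 2 ≤ M) (τ : ℝ) (hτ : 0 < τ) (lstar : Fin M → ℝ)
    (c : ℝ) (hc : 0 < c)
    (p₀ : Measure (Fin M → ℝ))
    (hp₀ : p₀ = volume.withDensity fun l => ENNReal.ofReal
      (if (∑ j, |l j - lstar j|) ≤ 2 * M * τ then
        c * ∏ j, ((τ ^ 2 + (l j - lstar j) ^ 2) ^ 2)⁻¹ else 0))
    (hprob : IsProbabilityMeasure p₀) :
    (∫ l, (l ⟨0, by omega⟩ - lstar ⟨0, by omega⟩) ^ 2 ∂p₀) ≤ 4 * τ ^ 2 := by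
  obtain ⟨m, rfl⟩ : ∃ m, M = m + 1 := ⟨M - 1, by omega⟩
  set i0 : Fin (m + 1) := ⟨0, by omega⟩ with hi0
  set a : ℝ := lstar i0 with ha
  set T : ℝ := 2 * (m + 1 : ℕ) * τ with hT
  set dens : (Fin (m + 1) → ℝ) → ℝ := fun l =>
    if (∑ j, |l j - lstar j|) ≤ T then c * ∏ j, ((τ ^ 2 + (l j - lstar j) ^ 2) ^ 2)⁻¹ else 0
    with hdens
  have hdens_nonneg : ∀ l, 0 ≤ dens l := by
    intro l
    dsimp only [dens]
    split
    · exact mul_nonneg hc.le (Finset.prod_nonneg fun j _ => by positivity)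
    · exact le_refl 0
  have hdens_meas : Measurable dens := by
    apply Measurable.ite
    · exact measurableSet_le (Finset.measurable_sum _ fun j _ =>
        ((measurable_pi_apply j).sub measurable_const).abs) measurable_const
    · exact measurable_const.mul (Finset.measurable_prod _ fun j _ =>
        by fun_prop)
    · exact measurable_const
  -- rewrite the p₀ hypothesis in terms of dens
  have hp₀' : p₀ = volume.withDensity fun l => ENNReal.ofReal (dens l) := hp₀
  have hmass : ∫⁻ l, ENNReal.ofReal (dens l) ∂(volume : Measure (Fin (m+1) → ℝ)) = 1 := by
    have h1 := hprob.measure_univ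
    rw [hp₀', withDensity_apply _ MeasurableSet.univ, setLIntegral_univ] at h1
    exact h1
  -- reduce goal to a lintegral inequality
  have hsq_meas : Measurable fun l : Fin (m+1) → ℝ => (l i0 - a)^2 :=
    ((measurable_pi_apply i0).sub measurable_const).pow_const 2
  rw [integral_eq_lintegral_of_nonneg_ae
    (Filter.Eventually.of_forall fun l => sq_nonneg _) hsq_meas.aestronglyMeasurable]
  apply ENNReal.toReal_le_of_le_ofReal (by positivity)
  rw [hp₀', lintegral_withDensity_eq_lintegral_mul _
    hdens_meas.ennreal_ofReal hsq_meas.ennreal_ofReal]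
  simp only [Pi.mul_apply]
  -- Fubini setup
  set e := MeasurableEquiv.piFinSuccAbove (fun _ : Fin (m+1) => ℝ) i0 with he
  have hmp := measurePreserving_piFinSuccAbove (fun _ : Fin (m+1) => (volume : Measure ℝ)) i0
  have fub : ∀ F : (Fin (m+1) → ℝ) → ℝ≥0∞, Measurable F →
      ∫⁻ l, F l = ∫⁻ y : Fin m → ℝ, ∫⁻ x : ℝ, F (i0.insertNth x y) := by
    intro F hF
    rw [volume_pi, ← (hmp.symm e).lintegral_comp hF,
      lintegral_prod_symm (fun z : ℝ × (Fin m → ℝ) => F (e.symm z))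
        ((hF.comp e.symm.measurable)).aemeasurable]
    rw [show (Measure.pi fun _ : Fin m => (volume : Measure ℝ)) = volume from (volume_pi).symm]
    rfl
  set S : (Fin m → ℝ) → ℝ := fun y => ∑ j, |y j - lstar (i0.succAbove j)| with hS
  set P : (Fin m → ℝ) → ℝ := fun y => ∏ j, ((τ^2 + (y j - lstar (i0.succAbove j))^2)^2)⁻¹ with hP
  have hcP_nonneg : ∀ y, 0 ≤ c * P y := fun y =>
    mul_nonneg hc.le (Finset.prod_nonneg fun j _ => by positivity)
  have hdens_eq : ∀ (x : ℝ) (y : Fin m → ℝ), dens (i0.insertNth x y)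
      = if |x - a| + S y ≤ T then (c * P y) * ((τ^2 + (x - a)^2)^2)⁻¹ else 0 := by
    intro x y
    dsimp only [dens, S, P]
    rw [Fin.sum_univ_succAbove _ i0, Fin.prod_univ_succAbove _ i0]
    simp only [Fin.insertNth_apply_same, Fin.insertNth_apply_succAbove]
    rw [show c * (((τ^2 + (x - a)^2)^2)⁻¹ * ∏ j, ((τ^2 + (y j - lstar (i0.succAbove j))^2)^2)⁻¹)
        = (c * ∏ j, ((τ^2 + (y j - lstar (i0.succAbove j))^2)^2)⁻¹) * ((τ^2 + (x - a)^2)^2)⁻¹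
      from by ring]
  set g : (Fin m → ℝ) → ℝ → ℝ≥0∞ := fun y x => ENNReal.ofReal
      ((if |x - a| + S y ≤ T then (c * P y) * ((τ^2+(x-a)^2)^2)⁻¹ else 0) * (x - a)^2) with hg
  set g' : (Fin m → ℝ) → ℝ → ℝ≥0∞ := fun y x => ENNReal.ofReal
      (if |x - a| + S y ≤ T then (c * P y) * ((τ^2+(x-a)^2)^2)⁻¹ else 0) with hg'
  have hFmeas : Measurable (fun l : Fin (m+1) → ℝ =>
      ENNReal.ofReal (dens l) * ENNReal.ofReal ((l i0 - a)^2)) :=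
    hdens_meas.ennreal_ofReal.mul hsq_meas.ennreal_ofReal
  have step1 : ∫⁻ l, ENNReal.ofReal (dens l) * ENNReal.ofReal ((l i0 - a)^2)
      = ∫⁻ y : Fin m → ℝ, ∫⁻ x : ℝ, g y x := by
    rw [fub _ hFmeas]
    apply lintegral_congr; intro y; apply lintegral_congr; intro x
    have hd : 0 ≤ (if |x - a| + S y ≤ T then (c * P y) * ((τ^2+(x-a)^2)^2)⁻¹ else 0) := by
      split
      · exact mul_nonneg (hcP_nonneg y) (by positivity)
      · exact le_refl 0
    simp only [hg]
    rw [hdens_eq x y, Fin.insertNth_apply_same, ENNReal.ofReal_mul hd]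
  have step2 : ∫⁻ l, ENNReal.ofReal (dens l) = ∫⁻ y : Fin m → ℝ, ∫⁻ x : ℝ, g' y x := by
    rw [fub _ hdens_meas.ennreal_ofReal]
    apply lintegral_congr; intro y; apply lintegral_congr; intro x
    simp only [hg']
    rw [hdens_eq x y]
  rw [step1]
  have step3 : ∫⁻ y : Fin m → ℝ, ∫⁻ x : ℝ, g y x
      ≤ ∫⁻ y : Fin m → ℝ, ENNReal.ofReal (4*τ^2) * ∫⁻ x : ℝ, g' y x :=
    lintegral_mono fun y => oneD_lintegral τ a (S y) T (c * P y) hτ (hcP_nonneg y)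
  refine step3.trans ?_
  rw [lintegral_const_mul' _ _ ENNReal.ofReal_ne_top, ← step2, hmass, mul_one]
end

section
/- Let M ≥ 2 be an integer, τ > 0, R > 2Mτ, and λ* ∈ ℝ^M with ‖λ*‖₁ ≤ R − 2Mτ. Let π be the sparsity prior on ℝ^M and let p₀ be the probability measure on ℝ^M with Lebesgue density proportional to ∏_{j=1}^M (τ² + (λ_j − λ*_j)²)^{-2} on {λ : ‖λ − λ*‖₁ ≤ 2Mτ} and zero elsewhere. Then p₀ ≪ π and KL(p₀, π) ≤ 4 ∑_{j=1}^M log(1 + |λ*_j|/τ) + 1. -/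
open MeasureTheory Set Filter Topology

variable {τ : ℝ} {M : ℕ}


lemma tpk_ratio {τ a x : ℝ} (hτ : 0 < τ) :
    τ^2 + x^2 ≤ (1 + |a|/τ)^2 * (τ^2 + (x-a)^2) := by
  have h1 : x^2 ≤ (|x-a| + |a|)^2 := by
    have hx : |x| ≤ |x-a| + |a| := by
      calc |x| = |(x-a) + a| := by ring_nf
      _ ≤ |x-a| + |a| := abs_add_le _ _
    nlinarith [abs_nonneg x, sq_abs x, abs_nonneg (x-a), abs_nonneg a]
  have h2 : (1 + |a|/τ)^2 * (τ^2 + (x-a)^2) = (τ + |a|)^2 * (τ^2 + (x-a)^2) / τ^2 := by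
    field_simp
  rw [h2, le_div_iff₀ (by positivity)]
  have hs := abs_nonneg (x-a); have ha := abs_nonneg a
  nlinarith [sq_abs (x-a), mul_nonneg (mul_nonneg ha hτ.le) (sq_nonneg (τ - |x-a|)),
    mul_nonneg (mul_nonneg (mul_nonneg ha hτ.le) hτ.le) hs,
    mul_nonneg (mul_nonneg ha ha) (mul_nonneg hs hs)]


lemma tpk_pos (hτ : 0 < τ) (u : ℝ) : 0 < (τ^2 + u^2)^2 := by positivity

lemma tpk_int1 (hτ : 0 < τ) : Integrable (fun u : ℝ => ((τ^2 + u^2)^2)⁻¹) := by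
  set m := min (τ^2) 1 with hm
  have hm0 : 0 < m := lt_min (by positivity) one_pos
  have : Integrable (fun u : ℝ => (τ^2 * m)⁻¹ * (1 + u^2)⁻¹) :=
    integrable_inv_one_add_sq.const_mul _
  refine this.mono' ?_ (ae_of_all _ fun u => ?_)
  · refine (Continuous.inv₀ (by continuity) fun u => ?_).aestronglyMeasurable
    exact (tpk_pos hτ u).ne'
  · rw [Real.norm_eq_abs, abs_of_nonneg (by positivity)]
    rw [← mul_inv]
    refine inv_anti₀ (by positivity) ?_
    have h1 : m * (1 + u^2) ≤ τ^2 + u^2 := by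
      have := min_le_left (τ^2) 1; have := min_le_right (τ^2) 1
      nlinarith [sq_nonneg u]
    calc τ^2 * m * (1 + u^2) = τ^2 * (m * (1+u^2)) := by ring
    _ ≤ (τ^2 + u^2) * (τ^2 + u^2) := by
        apply mul_le_mul (by nlinarith [sq_nonneg u]) h1 (by positivity) (by positivity)
    _ = (τ^2 + u^2)^2 := by ring

lemma tpk_int2 (hτ : 0 < τ) : Integrable (fun u : ℝ => |u| * ((τ^2 + u^2)^2)⁻¹) := by
  set m := min (τ^2) 1 with hm
  have hm0 : 0 < m := lt_min (by positivity) one_pos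
  have : Integrable (fun u : ℝ => (2*τ*m)⁻¹ * (1 + u^2)⁻¹) :=
    integrable_inv_one_add_sq.const_mul _
  refine this.mono' ?_ (ae_of_all _ fun u => ?_)
  · exact (continuous_abs.mul (Continuous.inv₀ (by continuity) fun u =>
      (tpk_pos hτ u).ne')).aestronglyMeasurable
  · rw [Real.norm_eq_abs, abs_of_nonneg (by positivity), ← mul_inv]
    rw [← div_eq_mul_inv, ← one_div (2*τ*m*(1+u^2)),
      div_le_div_iff₀ (by positivity) (by positivity)]
    have h1 : m * (1 + u^2) ≤ τ^2 + u^2 := by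
      have := min_le_left (τ^2) 1; have := min_le_right (τ^2) 1
      nlinarith [sq_nonneg u]
    have h2 : 2*τ*|u| ≤ τ^2 + u^2 := by
      nlinarith [sq_abs u, sq_nonneg (τ - |u|)]
    nlinarith [mul_le_mul h2 h1 (by positivity) (by positivity)]

lemma tpk_deriv (hτ : 0 < τ) (u : ℝ) :
    HasDerivAt (fun v : ℝ => -(2*(τ^2+v^2))⁻¹) (u * ((τ^2+u^2)^2)⁻¹) u := by
  have h : HasDerivAt (fun v : ℝ => 2*(τ^2+v^2)) (2*(2*u)) u := by
    have := ((hasDerivAt_pow 2 u).const_add (τ^2)).const_mul 2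
    simpa using this
  have h2 := (h.inv (by positivity)).neg
  convert h2 using 1
  all_goals try rfl
  have h3 : (0:ℝ) < τ^2 + u^2 := by positivity
  field_simp

lemma tpk_B (hτ : 0 < τ) : ∫ u : ℝ, |u| * ((τ^2 + u^2)^2)⁻¹ = (τ^2)⁻¹ := by
  have hint := tpk_int2 hτ
  have hIoi : ∫ u in Ioi (0:ℝ), |u| * ((τ^2+u^2)^2)⁻¹ = (2*τ^2)⁻¹ := by
    rw [setIntegral_congr_fun measurableSet_Ioi
      (fun u (hu : u ∈ Ioi (0:ℝ)) => by rw [abs_of_pos hu])]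
    have htend : Filter.Tendsto (fun v : ℝ => -(2*(τ^2+v^2))⁻¹) atTop (𝓝 0) := by
      have h1 : Filter.Tendsto (fun v : ℝ => 2*(τ^2+v^2)) atTop atTop := by
        apply Filter.Tendsto.const_mul_atTop two_pos
        exact tendsto_atTop_add_const_left _ _ (tendsto_pow_atTop two_ne_zero)
      simpa using (h1.inv_tendsto_atTop).neg
    have hio : IntegrableOn (fun u : ℝ => u * ((τ^2+u^2)^2)⁻¹) (Ioi 0) := by
      refine (hint.integrableOn).congr_fun (fun u (hu : u ∈ Ioi (0:ℝ)) => by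
        dsimp only; rw [abs_of_pos hu]) measurableSet_Ioi
    rw [integral_Ioi_of_hasDerivAt_of_tendsto' (fun x _ => tpk_deriv hτ x) hio htend]
    norm_num
  have hIic : ∫ u in Iic (0:ℝ), |u| * ((τ^2+u^2)^2)⁻¹ = (2*τ^2)⁻¹ := by
    have h := integral_comp_neg_Ioi (0:ℝ) (fun u => |u| * ((τ^2+u^2)^2)⁻¹)
    simp only [neg_zero] at h
    rw [← h, ← hIoi]
    congr 1; funext x
    rw [abs_neg, neg_sq]
  rw [← intervalIntegral.integral_Iic_add_Ioi hint.integrableOn hint.integrableOn, hIic, hIoi]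
  field_simp
  ring

lemma tpk_A (hτ : 0 < τ) : 89/100/τ^3 ≤ ∫ u : ℝ, ((τ^2 + u^2)^2)⁻¹ := by
  have hint := tpk_int1 hτ
  have hτ4 : (0:ℝ) < τ^4 := by positivity
  have hmono : ∀ (a b c : ℝ), a ≤ b → (∀ x ∈ Icc a b, c ≤ ((τ^2+x^2)^2)⁻¹) →
      (b - a) * c ≤ ∫ u in a..b, ((τ^2+u^2)^2)⁻¹ := by
    intro a b c hab hbd
    have := intervalIntegral.integral_mono_on hab (intervalIntegrable_const (c := c))
      (hint.intervalIntegrable) hbd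
    simpa using this
  have p1 : (τ/2) * (4*τ^4)⁻¹ ≤ ∫ u in (-τ)..(-τ/2), ((τ^2+u^2)^2)⁻¹ := by
    have := hmono (-τ) (-τ/2) (4*τ^4)⁻¹ (by linarith) (fun x hx => by
      have h1 : x^2 ≤ τ^2 := by nlinarith [hx.1, hx.2]
      apply inv_anti₀ (by positivity); nlinarith)
    have e : (-τ/2 - -τ) * (4*τ^4)⁻¹ = (τ/2) * (4*τ^4)⁻¹ := by ring
    linarith
  have p2 : τ * (25/16*τ^4)⁻¹ ≤ ∫ u in (-τ/2)..(τ/2), ((τ^2+u^2)^2)⁻¹ := by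
    have := hmono (-τ/2) (τ/2) (25/16*τ^4)⁻¹ (by linarith) (fun x hx => by
      have h1 : x^2 ≤ τ^2/4 := by nlinarith [hx.1, hx.2]
      apply inv_anti₀ (by positivity); nlinarith)
    have e : (τ/2 - -(τ/2)) * (25/16*τ^4)⁻¹ = τ * (25/16*τ^4)⁻¹ := by ring
    linarith
  have p3 : (τ/2) * (4*τ^4)⁻¹ ≤ ∫ u in (τ/2)..τ, ((τ^2+u^2)^2)⁻¹ := by
    have := hmono (τ/2) τ (4*τ^4)⁻¹ (by linarith) (fun x hx => by
      have h1 : x^2 ≤ τ^2 := by nlinarith [hx.1, hx.2]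
      apply inv_anti₀ (by positivity); nlinarith)
    have e : (τ - τ/2) * (4*τ^4)⁻¹ = (τ/2) * (4*τ^4)⁻¹ := by ring
    linarith
  have hsplit : ∫ u in (-τ)..τ, ((τ^2+u^2)^2)⁻¹ =
      (∫ u in (-τ)..(-τ/2), ((τ^2+u^2)^2)⁻¹) + (∫ u in (-τ/2)..(τ/2), ((τ^2+u^2)^2)⁻¹)
        + (∫ u in (τ/2)..τ, ((τ^2+u^2)^2)⁻¹) := by
    rw [intervalIntegral.integral_add_adjacent_intervals (hint.intervalIntegrable)
      (hint.intervalIntegrable),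
      intervalIntegral.integral_add_adjacent_intervals (hint.intervalIntegrable)
      (hint.intervalIntegrable)]
  have hset : ∫ u in (-τ)..τ, ((τ^2+u^2)^2)⁻¹ ≤ ∫ u : ℝ, ((τ^2+u^2)^2)⁻¹ := by
    rw [intervalIntegral.integral_of_le (by linarith)]
    exact setIntegral_le_integral hint (ae_of_all _ fun u => by positivity)
  have harith : (τ/2) * (4*τ^4)⁻¹ + τ * (25/16*τ^4)⁻¹ + (τ/2) * (4*τ^4)⁻¹ = 89/100/τ^3 := by
    field_simp
    ring
  linarith [hsplit ▸ hset]





lemma tpk_sum_meas (c : Fin M → ℝ) :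
    Measurable (fun l : Fin M → ℝ => ∑ j, |l j - c j|) := by
  exact Continuous.measurable <| continuous_finset_sum _ fun j _ =>
    ((continuous_apply j).sub continuous_const).abs

lemma tpk_prod_int (hτ : 0 < τ) :
    Integrable (fun l : Fin M → ℝ => ∏ j, ((τ^2 + (l j)^2)^2)⁻¹) :=
  Integrable.fintype_prod (fun _ => tpk_int1 hτ)

lemma tpk_prod_nonneg (l : Fin M → ℝ) : (0:ℝ) ≤ ∏ j, ((τ^2 + (l j)^2)^2)⁻¹ :=
  Finset.prod_nonneg fun j _ => by positivity

lemma tpk_coord_int (hτ : 0 < τ) (k : Fin M) :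
    Integrable (fun l : Fin M → ℝ => |l k| * ∏ j, ((τ^2 + (l j)^2)^2)⁻¹) ∧
    ∫ l : Fin M → ℝ, |l k| * ∏ j, ((τ^2 + (l j)^2)^2)⁻¹
      = (τ^2)⁻¹ * (∫ u : ℝ, ((τ^2 + u^2)^2)⁻¹) ^ (M - 1) := by
  set g : Fin M → ℝ → ℝ :=
    fun j u => if j = k then |u| * ((τ^2 + u^2)^2)⁻¹ else ((τ^2 + u^2)^2)⁻¹ with hg
  have hgint : ∀ j, Integrable (g j) := by
    intro j; by_cases hj : j = k
    · simp only [hg, if_pos hj]; exact tpk_int2 hτ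
    · simp only [hg, if_neg hj]; exact tpk_int1 hτ
  have he : (fun l : Fin M → ℝ => |l k| * ∏ j, ((τ^2 + (l j)^2)^2)⁻¹)
      = fun l => ∏ j, g j (l j) := by
    funext l
    rw [← Finset.mul_prod_erase Finset.univ (fun j => g j (l j)) (Finset.mem_univ k),
      ← Finset.mul_prod_erase Finset.univ (fun j => ((τ^2 + (l j)^2)^2)⁻¹) (Finset.mem_univ k)]
    have : ∀ j ∈ Finset.univ.erase k, g j (l j) = ((τ^2 + (l j)^2)^2)⁻¹ := by
      intro j hj
      simp only [hg, if_neg (Finset.ne_of_mem_erase hj)]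
    rw [Finset.prod_congr rfl this]
    simp only [hg, if_pos rfl]
    ring
  constructor
  · rw [he]; exact Integrable.fintype_prod hgint
  · rw [he, MeasureTheory.integral_fintype_prod_volume_eq_prod (ι := Fin M) g,
      ← Finset.mul_prod_erase Finset.univ (fun j => ∫ u, g j u) (Finset.mem_univ k)]
    have h1 : ∫ u, g k u = (τ^2)⁻¹ := by simp only [hg, if_pos rfl]; exact tpk_B hτ
    have h2 : ∀ j ∈ Finset.univ.erase k, (∫ u, g j u) = ∫ u : ℝ, ((τ^2 + u^2)^2)⁻¹ := by
      intro j hj; simp only [hg, if_neg (Finset.ne_of_mem_erase hj)]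
    rw [h1, Finset.prod_congr rfl h2, Finset.prod_const, Finset.card_erase_of_mem
      (Finset.mem_univ k), Finset.card_univ, Fintype.card_fin]

lemma tpk_prod_meas :
    Measurable (fun l : Fin M → ℝ => ∏ j, ((τ^2 + (l j)^2)^2)⁻¹) := by
  exact Finset.measurable_prod Finset.univ (fun j _ =>
    Measurable.inv (by fun_prop))

lemma tpk_if_int (hτ : 0 < τ) (c : Fin M → ℝ) (s : ℝ) :
    Integrable (fun l : Fin M → ℝ =>
      if (∑ j, |l j - c j|) ≤ s then ∏ j, ((τ^2 + (l j)^2)^2)⁻¹ else 0) := by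
  refine (tpk_prod_int hτ).mono' ?_ (ae_of_all _ fun l => ?_)
  · refine (Measurable.ite (measurableSet_le (tpk_sum_meas c) measurable_const)
      tpk_prod_meas measurable_const).aestronglyMeasurable
  · rw [Real.norm_eq_abs]
    by_cases h : (∑ j, |l j - c j|) ≤ s
    · rw [if_pos h, abs_of_nonneg (tpk_prod_nonneg l)]
    · rw [if_neg h, abs_zero]; exact tpk_prod_nonneg l

lemma tpk_ifneg_int (hτ : 0 < τ) (c : Fin M → ℝ) (s : ℝ) :
    Integrable (fun l : Fin M → ℝ =>
      if (∑ j, |l j - c j|) ≤ s then 0 else ∏ j, ((τ^2 + (l j)^2)^2)⁻¹) := by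
  refine (tpk_prod_int hτ).mono' ?_ (ae_of_all _ fun l => ?_)
  · refine (Measurable.ite (measurableSet_le (tpk_sum_meas c) measurable_const)
      measurable_const tpk_prod_meas).aestronglyMeasurable
  · rw [Real.norm_eq_abs]
    by_cases h : (∑ j, |l j - c j|) ≤ s
    · rw [if_pos h, abs_zero]; exact tpk_prod_nonneg l
    · rw [if_neg h, abs_of_nonneg (tpk_prod_nonneg l)]

lemma tpk_upper (hτ : 0 < τ) (R : ℝ) :
    ∫ l : Fin M → ℝ, (if (∑ j, |l j - (0 : Fin M → ℝ) j|) ≤ R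
        then ∏ j, ((τ^2 + (l j)^2)^2)⁻¹ else 0)
      ≤ (∫ u : ℝ, ((τ^2 + u^2)^2)⁻¹) ^ M := by
  have := MeasureTheory.integral_fintype_prod_volume_eq_pow (ι := Fin M)
    (fun u : ℝ => ((τ^2 + u^2)^2)⁻¹)
  rw [Fintype.card_fin] at this
  rw [← this]
  refine integral_mono (tpk_if_int hτ 0 R) (tpk_prod_int hτ) fun l => ?_
  by_cases h : (∑ j, |l j - (0 : Fin M → ℝ) j|) ≤ R
  · rw [if_pos h]
  · rw [if_neg h]; exact tpk_prod_nonneg l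

lemma tpk_lower (hτ : 0 < τ) (s : ℝ) (hs : 0 < s) :
    (∫ u : ℝ, ((τ^2 + u^2)^2)⁻¹) ^ M
        - s⁻¹ * (M * ((τ^2)⁻¹ * (∫ u : ℝ, ((τ^2 + u^2)^2)⁻¹) ^ (M - 1)))
      ≤ ∫ l : Fin M → ℝ, (if (∑ j, |l j - (0 : Fin M → ℝ) j|) ≤ s
          then ∏ j, ((τ^2 + (l j)^2)^2)⁻¹ else 0) := by
  have hsum_int : Integrable (fun l : Fin M → ℝ =>
      s⁻¹ * ∑ k, |l k| * ∏ j, ((τ^2 + (l j)^2)^2)⁻¹) :=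
    (integrable_finset_sum _ fun k _ => (tpk_coord_int hτ k).1).const_mul _
  have hT : ∫ l : Fin M → ℝ, (if (∑ j, |l j - (0 : Fin M → ℝ) j|) ≤ s
        then 0 else ∏ j, ((τ^2 + (l j)^2)^2)⁻¹)
      ≤ s⁻¹ * (M * ((τ^2)⁻¹ * (∫ u : ℝ, ((τ^2 + u^2)^2)⁻¹) ^ (M - 1))) := by
    have hb : ∀ l : Fin M → ℝ, (if (∑ j, |l j - (0 : Fin M → ℝ) j|) ≤ s
          then 0 else ∏ j, ((τ^2 + (l j)^2)^2)⁻¹)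
        ≤ s⁻¹ * ∑ k, |l k| * ∏ j, ((τ^2 + (l j)^2)^2)⁻¹ := by
      intro l
      have hnn : (0:ℝ) ≤ s⁻¹ * ∑ k, |l k| * ∏ j, ((τ^2 + (l j)^2)^2)⁻¹ := by
        refine mul_nonneg (by positivity) (Finset.sum_nonneg fun k _ =>
          mul_nonneg (abs_nonneg _) (tpk_prod_nonneg l))
      by_cases h : (∑ j, |l j - (0 : Fin M → ℝ) j|) ≤ s
      · rw [if_pos h]; exact hnn
      · rw [if_neg h]
        push_neg at h
        have h0 : (∑ j, |l j - (0 : Fin M → ℝ) j|) = ∑ j, |l j| := by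
          refine Finset.sum_congr rfl fun j _ => by simp
        rw [h0] at h
        have h1 : (1:ℝ) ≤ s⁻¹ * ∑ k, |l k| := by
          rw [← div_eq_inv_mul, le_div_iff₀ hs, one_mul]; exact h.le
        calc ∏ j, ((τ^2 + (l j)^2)^2)⁻¹
            = 1 * ∏ j, ((τ^2 + (l j)^2)^2)⁻¹ := (one_mul _).symm
          _ ≤ (s⁻¹ * ∑ k, |l k|) * ∏ j, ((τ^2 + (l j)^2)^2)⁻¹ :=
              mul_le_mul_of_nonneg_right h1 (tpk_prod_nonneg l)
          _ = s⁻¹ * ∑ k, |l k| * ∏ j, ((τ^2 + (l j)^2)^2)⁻¹ := by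
              rw [mul_assoc, Finset.sum_mul]
    calc ∫ l : Fin M → ℝ, (if (∑ j, |l j - (0 : Fin M → ℝ) j|) ≤ s
          then 0 else ∏ j, ((τ^2 + (l j)^2)^2)⁻¹)
        ≤ ∫ l : Fin M → ℝ, s⁻¹ * ∑ k, |l k| * ∏ j, ((τ^2 + (l j)^2)^2)⁻¹ :=
          integral_mono (tpk_ifneg_int hτ 0 s) hsum_int hb
      _ = s⁻¹ * ∑ k : Fin M, ∫ l : Fin M → ℝ, |l k| * ∏ j, ((τ^2 + (l j)^2)^2)⁻¹ := by
          rw [integral_const_mul, integral_finset_sum _ fun k _ => (tpk_coord_int hτ k).1]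
      _ = s⁻¹ * (M * ((τ^2)⁻¹ * (∫ u : ℝ, ((τ^2 + u^2)^2)⁻¹) ^ (M - 1))) := by
          rw [Finset.sum_congr rfl fun k _ => (tpk_coord_int hτ k).2, Finset.sum_const,
            Finset.card_univ, Fintype.card_fin]
          rw [nsmul_eq_mul]
  have hadd : (∫ l : Fin M → ℝ, (if (∑ j, |l j - (0 : Fin M → ℝ) j|) ≤ s
          then ∏ j, ((τ^2 + (l j)^2)^2)⁻¹ else 0))
        + (∫ l : Fin M → ℝ, (if (∑ j, |l j - (0 : Fin M → ℝ) j|) ≤ s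
          then 0 else ∏ j, ((τ^2 + (l j)^2)^2)⁻¹))
      = (∫ u : ℝ, ((τ^2 + u^2)^2)⁻¹) ^ M := by
    have := MeasureTheory.integral_fintype_prod_volume_eq_pow (ι := Fin M)
      (fun u : ℝ => ((τ^2 + u^2)^2)⁻¹)
    rw [Fintype.card_fin] at this
    rw [← this, ← integral_add (tpk_if_int hτ 0 s) (tpk_ifneg_int hτ 0 s)]
    congr 1; funext l
    by_cases h : (∑ j, |l j - (0 : Fin M → ℝ) j|) ≤ s <;>
      simp only [Pi.zero_apply, sub_zero] at h <;> simp [h]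
  linarith


lemma tpk_prod_meas' (c : Fin M → ℝ) :
    Measurable (fun l : Fin M → ℝ => ∏ j, ((τ^2 + (l j - c j)^2)^2)⁻¹) :=
  Finset.measurable_prod Finset.univ (fun j _ => Measurable.inv
    (by fun_prop))

lemma tpk_ratio_meas (c : Fin M → ℝ) :
    Measurable (fun l : Fin M → ℝ =>
      ∏ j, ((τ^2 + (l j)^2)^2 * ((τ^2 + (l j - c j)^2)^2)⁻¹)) :=
  Finset.measurable_prod Finset.univ (fun j _ => Measurable.mul
    (by fun_prop)
    (Measurable.inv
      (by fun_prop)))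

set_option maxHeartbeats 1000000 in
/-- Lemma 3: Let `M ≥ 2`, `τ > 0`, `R > 2Mτ`, and `λ* ∈ ℝ^M` with
`‖λ*‖₁ ≤ R − 2Mτ`.  Let `π` be the sparsity prior and `p₀` the translated-and-truncated
prior centered at `λ*`.  Then `p₀ ≪ π` and `KL(p₀, π) ≤ 4 ∑_j log(1 + |λ*_j|/τ) + 1`. -/
theorem translated_prior_KL
    (M : ℕ) (hM : 2 ≤ M) (τ R : ℝ) (hτ : 0 < τ) (hR : 2 * M * τ < R)
    (lstar : Fin M → ℝ) (hlstar : (∑ j, |lstar j|) ≤ R - 2 * M * τ)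
    -- the sparsity prior π (with normalizing constant cπ)
    (cπ : ℝ) (hcπ : 0 < cπ)
    (π : Measure (Fin M → ℝ))
    (hπ : π = volume.withDensity fun l => ENNReal.ofReal
      (if (∑ j, |l j|) ≤ R then cπ * ∏ j, ((τ ^ 2 + l j ^ 2) ^ 2)⁻¹ else 0))
    (hπprob : IsProbabilityMeasure π)
    -- the translated and truncated prior p₀ (with normalizing constant c₀)
    (c₀ : ℝ) (hc₀ : 0 < c₀)
    (p₀ : Measure (Fin M → ℝ))
    (hp₀ : p₀ = volume.withDensity fun l => ENNReal.ofReal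
      (if (∑ j, |l j - lstar j|) ≤ 2 * M * τ then
        c₀ * ∏ j, ((τ ^ 2 + (l j - lstar j) ^ 2) ^ 2)⁻¹ else 0))
    (hp₀prob : IsProbabilityMeasure p₀) :
    p₀ ≪ π ∧
      (∫ l, Real.log ((p₀.rnDeriv π l).toReal) ∂p₀) ≤
        4 * ∑ j, Real.log (1 + |lstar j| / τ) + 1 := by
  have h2M : (2:ℝ) ≤ (M:ℝ) := by exact_mod_cast hM
  have hs0 : (0:ℝ) < 2 * M * τ := by nlinarith
  set dπ : (Fin M → ℝ) → ℝ := fun l =>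
    if (∑ j, |l j|) ≤ R then cπ * ∏ j, ((τ ^ 2 + l j ^ 2) ^ 2)⁻¹ else 0 with hdπ
  set d₀ : (Fin M → ℝ) → ℝ := fun l =>
    if (∑ j, |l j - lstar j|) ≤ 2 * M * τ then
      c₀ * ∏ j, ((τ ^ 2 + (l j - lstar j) ^ 2) ^ 2)⁻¹ else 0 with hd₀
  set r : (Fin M → ℝ) → ℝ := fun l =>
    if (∑ j, |l j - lstar j|) ≤ 2 * M * τ then
      (c₀ / cπ) * ∏ j, ((τ ^ 2 + l j ^ 2) ^ 2 * ((τ ^ 2 + (l j - lstar j) ^ 2) ^ 2)⁻¹)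
    else 0 with hr
  -- measurability
  have hmes_sum0 : Measurable (fun l : Fin M → ℝ => ∑ j, |l j|) := by
    have := tpk_sum_meas (M := M) 0
    simpa using this
  have hmes_dπ : Measurable dπ :=
    Measurable.ite (measurableSet_le hmes_sum0 measurable_const)
      (measurable_const.mul tpk_prod_meas) measurable_const
  have hmes_d₀ : Measurable d₀ :=
    Measurable.ite (measurableSet_le (tpk_sum_meas lstar) measurable_const)
      (measurable_const.mul (tpk_prod_meas' lstar)) measurable_const
  have hmes_r : Measurable r :=
    Measurable.ite (measurableSet_le (tpk_sum_meas lstar) measurable_const)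
      (measurable_const.mul (tpk_ratio_meas lstar)) measurable_const
  -- nonnegativity
  have hnn_dπ : ∀ l, 0 ≤ dπ l := by
    intro l; simp only [hdπ]
    by_cases h : (∑ j, |l j|) ≤ R
    · rw [if_pos h]
      exact mul_nonneg hcπ.le (Finset.prod_nonneg fun j _ => by positivity)
    · rw [if_neg h]
  have hnn_d₀ : ∀ l, 0 ≤ d₀ l := by
    intro l; simp only [hd₀]
    by_cases h : (∑ j, |l j - lstar j|) ≤ 2 * M * τ
    · rw [if_pos h]
      exact mul_nonneg hc₀.le (Finset.prod_nonneg fun j _ => by positivity)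
    · rw [if_neg h]
  have hnn_r : ∀ l, 0 ≤ r l := by
    intro l; simp only [hr]
    by_cases h : (∑ j, |l j - lstar j|) ≤ 2 * M * τ
    · rw [if_pos h]
      exact mul_nonneg (div_pos hc₀ hcπ).le (Finset.prod_nonneg fun j _ => by positivity)
    · rw [if_neg h]
  -- support implication
  have himp : ∀ l : Fin M → ℝ, (∑ j, |l j - lstar j|) ≤ 2 * M * τ → (∑ j, |l j|) ≤ R := by
    intro l hl
    have h1 : (∑ j, |l j|) ≤ (∑ j, |l j - lstar j|) + ∑ j, |lstar j| := by
      rw [← Finset.sum_add_distrib]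
      refine Finset.sum_le_sum fun j _ => ?_
      calc |l j| = |(l j - lstar j) + lstar j| := by ring_nf
        _ ≤ |l j - lstar j| + |lstar j| := abs_add_le _ _
    linarith
  -- density factorization
  have hfact : ∀ l, ENNReal.ofReal (dπ l) * ENNReal.ofReal (r l) = ENNReal.ofReal (d₀ l) := by
    intro l
    by_cases h : (∑ j, |l j - lstar j|) ≤ 2 * M * τ
    · rw [← ENNReal.ofReal_mul (hnn_dπ l)]
      congr 1
      simp only [hdπ, hd₀, hr]
      rw [if_pos h, if_pos h, if_pos (himp l h)]
      have hP : (∏ j, ((τ ^ 2 + l j ^ 2) ^ 2)⁻¹)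
            * (∏ j, ((τ ^ 2 + l j ^ 2) ^ 2 * ((τ ^ 2 + (l j - lstar j) ^ 2) ^ 2)⁻¹))
          = ∏ j, ((τ ^ 2 + (l j - lstar j) ^ 2) ^ 2)⁻¹ := by
        rw [← Finset.prod_mul_distrib]
        refine Finset.prod_congr rfl fun j _ => ?_
        have h1 : (τ ^ 2 + l j ^ 2) ^ 2 ≠ 0 := by positivity
        field_simp
      have hc : cπ * (c₀ / cπ) = c₀ := by field_simp
      linear_combination (cπ * (c₀ / cπ)) * hP
        + (∏ j, ((τ ^ 2 + (l j - lstar j) ^ 2) ^ 2)⁻¹) * hc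
    · simp only [hd₀, hr]
      rw [if_neg h, if_neg h, ENNReal.ofReal_zero, mul_zero]
  -- p₀ as withDensity over π
  have hπ2 : π = volume.withDensity (fun l => ENNReal.ofReal (dπ l)) := hπ
  have hp₀2 : p₀ = volume.withDensity (fun l => ENNReal.ofReal (d₀ l)) := hp₀
  have hp₀π : p₀ = π.withDensity (fun l => ENNReal.ofReal (r l)) := by
    rw [hp₀2, hπ2, ← withDensity_mul _ hmes_dπ.ennreal_ofReal hmes_r.ennreal_ofReal]
    congr 1
    funext l
    exact (hfact l).symm
  have hAC : p₀ ≪ π := by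
    rw [hp₀π]; exact withDensity_absolutelyContinuous π _
  have hrn : p₀.rnDeriv π =ᵐ[π] fun l => ENNReal.ofReal (r l) := by
    rw [hp₀π]; exact Measure.rnDeriv_withDensity π hmes_r.ennreal_ofReal
  have hrn0 : p₀.rnDeriv π =ᵐ[p₀] fun l => ENNReal.ofReal (r l) := hAC.ae_eq hrn
  -- p₀ a.e. support
  have hSset : MeasurableSet {l : Fin M → ℝ | (∑ j, |l j - lstar j|) ≤ 2 * M * τ} :=
    measurableSet_le (tpk_sum_meas lstar) measurable_const
  have hsupp : ∀ᵐ l ∂p₀, (∑ j, |l j - lstar j|) ≤ 2 * M * τ := by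
    rw [ae_iff, hp₀2, ← Set.compl_setOf, withDensity_apply _ hSset.compl]
    have h0 : ∀ l ∈ {l : Fin M → ℝ | (∑ j, |l j - lstar j|) ≤ 2*M*τ}ᶜ,
        ENNReal.ofReal (d₀ l) = 0 := by
      intro l hl
      simp only [Set.mem_compl_iff, Set.mem_setOf_eq] at hl
      simp only [hd₀]
      rw [if_neg hl, ENNReal.ofReal_zero]
    rw [setLIntegral_congr_fun hSset.compl h0, lintegral_zero]
  -- normalizing constants
  have hπuniv : π Set.univ = 1 := measure_univ
  rw [hπ2, withDensity_apply _ MeasurableSet.univ, Measure.restrict_univ] at hπuniv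
  have hintπ : ∫ l, dπ l = 1 := by
    rw [integral_eq_lintegral_of_nonneg_ae (ae_of_all _ hnn_dπ)
      hmes_dπ.aestronglyMeasurable, hπuniv, ENNReal.toReal_one]
  have hp₀univ : p₀ Set.univ = 1 := measure_univ
  rw [hp₀2, withDensity_apply _ MeasurableSet.univ, Measure.restrict_univ] at hp₀univ
  have hint₀ : ∫ l, d₀ l = 1 := by
    rw [integral_eq_lintegral_of_nonneg_ae (ae_of_all _ hnn_d₀)
      hmes_d₀.aestronglyMeasurable, hp₀univ, ENNReal.toReal_one]
  have hdπ_eq : dπ = fun l =>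
      cπ * (if (∑ j, |l j|) ≤ R then ∏ j, ((τ^2 + l j ^2)^2)⁻¹ else 0) := by
    funext l; simp only [hdπ]
    by_cases h : (∑ j, |l j|) ≤ R <;> simp [h]
  have hd₀_eq : d₀ = fun l =>
      c₀ * (if (∑ j, |l j - lstar j|) ≤ 2*M*τ
        then ∏ j, ((τ^2 + (l j - lstar j)^2)^2)⁻¹ else 0) := by
    funext l; simp only [hd₀]
    by_cases h : (∑ j, |l j - lstar j|) ≤ 2*M*τ <;> simp [h]
  have hIπ : cπ * ∫ l : Fin M → ℝ,
      (if (∑ j, |l j|) ≤ R then ∏ j, ((τ^2 + l j ^2)^2)⁻¹ else 0) = 1 := by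
    rw [← integral_const_mul, ← hdπ_eq]; exact hintπ
  have hI₀' : c₀ * ∫ l : Fin M → ℝ,
      (if (∑ j, |l j - lstar j|) ≤ 2*M*τ
        then ∏ j, ((τ^2 + (l j - lstar j)^2)^2)⁻¹ else 0) = 1 := by
    rw [← integral_const_mul, ← hd₀_eq]; exact hint₀
  have htrans : ∫ l : Fin M → ℝ,
      (if (∑ j, |l j - lstar j|) ≤ 2*M*τ
        then ∏ j, ((τ^2 + (l j - lstar j)^2)^2)⁻¹ else 0)
      = ∫ l : Fin M → ℝ,
      (if (∑ j, |l j|) ≤ 2*M*τ then ∏ j, ((τ^2 + (l j)^2)^2)⁻¹ else 0) := by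
    have h := integral_sub_right_eq_self (μ := volume)
      (fun u : Fin M → ℝ =>
        if (∑ j, |u j|) ≤ 2*M*τ then ∏ j, ((τ^2 + (u j)^2)^2)⁻¹ else 0) lstar
    rw [← h]
    rfl
  have hI₀ : c₀ * ∫ l : Fin M → ℝ,
      (if (∑ j, |l j|) ≤ 2*M*τ then ∏ j, ((τ^2 + (l j)^2)^2)⁻¹ else 0) = 1 := by
    rw [← htrans]; exact hI₀'
  -- bounds on the truncated integrals
  have hupper := tpk_upper (M := M) hτ R
  simp only [Pi.zero_apply, sub_zero] at hupper
  have hlower := tpk_lower (M := M) hτ (2*M*τ) hs0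
  simp only [Pi.zero_apply, sub_zero] at hlower
  have hA := tpk_A hτ
  have hApos : 0 < ∫ u : ℝ, ((τ^2 + u^2)^2)⁻¹ := lt_of_lt_of_le (by positivity) hA
  set A : ℝ := ∫ u : ℝ, ((τ^2 + u^2)^2)⁻¹ with hAdef
  have hApow : 0 < A^(M-1) := pow_pos hApos _
  have hAM : A^(M-1) * A = A^M := by
    rw [← pow_succ]
    congr 1
    omega
  have e1 : (2*(M:ℝ)*τ)⁻¹ * ((M:ℝ) * ((τ^2)⁻¹ * A^(M-1))) = (2*τ^3)⁻¹ * A^(M-1) := by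
    have hM0 : (M:ℝ) ≠ 0 := by positivity
    field_simp
  have e2 : (2*τ^3)⁻¹ ≤ (50/89) * A := by
    have h1 : (50/89:ℝ) * (89/100/τ^3) = (2*τ^3)⁻¹ := by
      field_simp
      ring
    rw [← h1]
    exact mul_le_mul_of_nonneg_left hA (by norm_num)
  have hkey : ∫ l : Fin M → ℝ,
      (if (∑ j, |l j|) ≤ R then ∏ j, ((τ^2 + l j ^2)^2)⁻¹ else 0)
      ≤ (89/39) * ∫ l : Fin M → ℝ,
      (if (∑ j, |l j|) ≤ 2*M*τ then ∏ j, ((τ^2 + (l j)^2)^2)⁻¹ else 0) := by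
    have htail : (2*(M:ℝ)*τ)⁻¹ * ((M:ℝ) * ((τ^2)⁻¹ * A^(M-1))) ≤ (50/89) * A^M := by
      rw [e1, ← hAM]
      calc (2*τ^3)⁻¹ * A^(M-1) ≤ ((50/89) * A) * A^(M-1) :=
            mul_le_mul_of_nonneg_right e2 hApow.le
        _ = 50/89 * (A^(M-1) * A) := by ring
    nlinarith [hlower, hupper, pow_pos hApos M]
  -- ratio of normalizing constants
  have hIπv : (∫ l : Fin M → ℝ,
      (if (∑ j, |l j|) ≤ R then ∏ j, ((τ^2 + l j ^2)^2)⁻¹ else 0)) = 1/cπ :=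
    eq_one_div_of_mul_eq_one_left (by rw [mul_comm]; exact hIπ)
  have hI₀v : (∫ l : Fin M → ℝ,
      (if (∑ j, |l j|) ≤ 2*M*τ then ∏ j, ((τ^2 + (l j)^2)^2)⁻¹ else 0)) = 1/c₀ :=
    eq_one_div_of_mul_eq_one_left (by rw [mul_comm]; exact hI₀)
  rw [hIπv, hI₀v] at hkey
  have hc₀cπ : c₀/cπ ≤ 89/39 := by
    have h1 : c₀ * (1/cπ) ≤ c₀ * (89/39 * (1/c₀)) := mul_le_mul_of_nonneg_left hkey hc₀.le
    have h2 : c₀ * (89/39 * (1/c₀)) = 89/39 := by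
      field_simp
    have h3 : c₀ * (1/cπ) = c₀/cπ := by ring
    rw [h2, h3] at h1
    exact h1
  have hlog1 : Real.log (c₀/cπ) ≤ 1 := by
    rw [Real.log_le_iff_le_exp (div_pos hc₀ hcπ)]
    calc c₀/cπ ≤ 89/39 := hc₀cπ
      _ ≤ 2.7182818283 := by norm_num
      _ ≤ Real.exp 1 := Real.exp_one_gt_d9.le
  -- pointwise log bound
  have hae : ∀ᵐ l ∂p₀, Real.log ((p₀.rnDeriv π l).toReal)
      ≤ 4 * ∑ j, Real.log (1 + |lstar j| / τ) + 1 := by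
    filter_upwards [hrn0, hsupp] with l h1 h2
    rw [h1, ENNReal.toReal_ofReal (hnn_r l)]
    simp only [hr]
    rw [if_pos h2]
    have hqpos : ∀ j : Fin M, 0 < (τ^2 + l j ^2)^2 * ((τ^2 + (l j - lstar j)^2)^2)⁻¹ :=
      fun j => by positivity
    have hqle : ∀ j ∈ Finset.univ, (τ^2 + l j ^2)^2 * ((τ^2 + (l j - lstar j)^2)^2)⁻¹
        ≤ (1 + |lstar j|/τ)^4 := by
      intro j _
      rw [← div_eq_mul_inv, div_le_iff₀ (by positivity)]
      have h3 := tpk_ratio (τ := τ) (a := lstar j) (x := l j) hτ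
      calc (τ^2 + l j ^2)^2
          ≤ ((1 + |lstar j|/τ)^2 * (τ^2 + (l j - lstar j)^2))^2 := by
            apply pow_le_pow_left₀ (by positivity) h3
        _ = (1 + |lstar j|/τ)^4 * (τ^2 + (l j - lstar j)^2)^2 := by ring
    have hprodpos : 0 < ∏ j, ((τ^2 + l j ^2)^2 * ((τ^2 + (l j - lstar j)^2)^2)⁻¹) :=
      Finset.prod_pos fun j _ => hqpos j
    have hrle : (c₀/cπ) * ∏ j, ((τ^2 + l j ^2)^2 * ((τ^2 + (l j - lstar j)^2)^2)⁻¹)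
        ≤ (c₀/cπ) * ∏ j, (1 + |lstar j|/τ)^4 :=
      mul_le_mul_of_nonneg_left
        (Finset.prod_le_prod (fun j _ => (hqpos j).le) hqle) (div_pos hc₀ hcπ).le
    have hlog2 : Real.log ((c₀/cπ) * ∏ j, ((τ^2 + l j ^2)^2 * ((τ^2 + (l j - lstar j)^2)^2)⁻¹))
        ≤ Real.log ((c₀/cπ) * ∏ j, (1 + |lstar j|/τ)^4) :=
      Real.log_le_log (mul_pos (div_pos hc₀ hcπ) hprodpos) hrle
    have hsplit : Real.log ((c₀/cπ) * ∏ j, (1 + |lstar j|/τ)^4)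
        = Real.log (c₀/cπ) + ∑ j, Real.log ((1 + |lstar j|/τ)^4) := by
      rw [Real.log_mul (div_pos hc₀ hcπ).ne'
        (Finset.prod_pos fun j _ => by positivity).ne', Real.log_prod]
      intro j _
      positivity
    have hlogpow : ∑ j, Real.log ((1 + |lstar j|/τ)^4)
        = 4 * ∑ j, Real.log (1 + |lstar j|/τ) := by
      rw [Finset.mul_sum]
      refine Finset.sum_congr rfl fun j _ => ?_
      rw [Real.log_pow]
      norm_num
    rw [hsplit, hlogpow] at hlog2
    linarith
  refine ⟨hAC, ?_⟩
  by_cases hint : Integrable (fun l => Real.log ((p₀.rnDeriv π l).toReal)) p₀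
  · have hle := integral_mono_ae hint (integrable_const _) hae
    rwa [integral_const, probReal_univ, one_smul] at hle
  · rw [integral_undef hint]
    have h0 : 0 ≤ ∑ j, Real.log (1 + |lstar j|/τ) :=
      Finset.sum_nonneg fun j _ => Real.log_nonneg (le_add_of_nonneg_right (by positivity))
    linarith
end

section
/- For every integer M ≥ 2: ∫_{{u ∈ ℝ^M : ‖u‖₁ ≤ 2M}} ∏_{j=1}^M (1 + u_j²)^{-2} du ≥ (1 − 1/M) · (π/2)^M. -/
open MeasureTheory

open Real Filter Set Topology

noncomputable def fq (t : ℝ) : ℝ := ((1 + t ^ 2) ^ 2)⁻¹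

lemma one_add_sq_pos (t : ℝ) : (0:ℝ) < 1 + t ^ 2 := by positivity

lemma fq_nonneg (t : ℝ) : 0 ≤ fq t := by rw [fq]; positivity

lemma fq_cont : Continuous fq := by
  rw [show fq = fun t => ((1 + t ^ 2) ^ 2)⁻¹ from rfl]
  exact Continuous.inv₀ (by continuity) (fun t => by positivity)

lemma fq_bound {a t : ℝ} (h : a ≤ 1 + t ^ 2) : a * fq t ≤ (1 + t ^ 2)⁻¹ := by
  have h1 : (0:ℝ) < 1 + t ^ 2 := one_add_sq_pos t
  have e : (1 + t ^ 2) * fq t = (1 + t ^ 2)⁻¹ := by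
    rw [fq]; field_simp
  calc a * fq t ≤ (1 + t ^ 2) * fq t := mul_le_mul_of_nonneg_right h (fq_nonneg t)
  _ = _ := e

lemma fq_integrable : Integrable fq := by
  refine integrable_inv_one_add_sq.mono fq_cont.aestronglyMeasurable ?_
  filter_upwards with t
  have h1 : (0:ℝ) < 1 + t ^ 2 := one_add_sq_pos t
  rw [Real.norm_eq_abs, Real.norm_eq_abs, abs_of_nonneg (fq_nonneg t),
    abs_of_nonneg (le_of_lt (inv_pos.mpr h1))]
  simpa using fq_bound (t := t) (a := 1) (by nlinarith)

lemma abs_fq_integrable : Integrable (fun t => |t| * fq t) := by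
  refine integrable_inv_one_add_sq.mono ((continuous_abs.mul fq_cont).aestronglyMeasurable) ?_
  filter_upwards with t
  have h1 : (0:ℝ) < 1 + t ^ 2 := one_add_sq_pos t
  rw [Real.norm_eq_abs, Real.norm_eq_abs,
    abs_of_nonneg (mul_nonneg (abs_nonneg t) (fq_nonneg t)),
    abs_of_nonneg (le_of_lt (inv_pos.mpr h1))]
  exact fq_bound (by nlinarith [abs_nonneg t, sq_abs t])

lemma sq_fq_integrable : Integrable (fun t => t ^ 2 * fq t) := by
  refine integrable_inv_one_add_sq.mono ((continuous_pow 2).mul fq_cont).aestronglyMeasurable ?_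
  filter_upwards with t
  have h1 : (0:ℝ) < 1 + t ^ 2 := one_add_sq_pos t
  rw [Real.norm_eq_abs, Real.norm_eq_abs,
    abs_of_nonneg (mul_nonneg (sq_nonneg t) (fq_nonneg t)),
    abs_of_nonneg (le_of_lt (inv_pos.mpr h1))]
  exact fq_bound (by nlinarith)

lemma tendsto_frac : Tendsto (fun t : ℝ => t / (1 + t ^ 2)) atTop (𝓝 0) := by
  have h : Tendsto (fun t : ℝ => t⁻¹ + t) atTop atTop := by
    apply tendsto_atTop_mono' _ _ tendsto_id
    filter_upwards [eventually_gt_atTop (0:ℝ)] with t ht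
    simp only [id]
    nlinarith [inv_pos.mpr ht]
  apply h.inv_tendsto_atTop.congr'
  filter_upwards [eventually_gt_atTop (0:ℝ)] with t ht
  have ht' : t ≠ 0 := ne_of_gt ht
  simp only [Pi.inv_apply]
  have e : t⁻¹ + t = (1 + t ^ 2) / t := by field_simp
  rw [e, inv_div]

lemma tendsto_arctan' : Tendsto arctan atTop (𝓝 (π / 2)) :=
  tendsto_arctan_atTop.mono_right nhdsWithin_le_nhds

lemma int_Ioi_fq : ∫ t in Ioi (0:ℝ), fq t = π / 4 := by
  have key : ∫ t in Ioi (0:ℝ), fq t =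
      (π/2 + 0)/2 - (arctan 0 + 0 / (1 + (0:ℝ)^2))/2 := by
    apply integral_Ioi_of_hasDerivAt_of_tendsto'
      (f := fun t => (arctan t + t / (1 + t ^ 2))/2)
    · intro x _
      have h1 : (0:ℝ) < 1 + x ^ 2 := one_add_sq_pos x
      have hd : HasDerivAt (fun t : ℝ => t / (1 + t ^ 2))
          ((1 * (1 + x^2) - x * (2*x)) / (1 + x^2)^2) x := by
        have hp : HasDerivAt (fun t : ℝ => 1 + t ^ 2) (2 * x) x := by
          simpa using ((hasDerivAt_pow 2 x).const_add 1)
        exact (hasDerivAt_id x).div hp (ne_of_gt h1)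
      have := ((hasDerivAt_arctan x).add hd).div_const 2
      convert this using 1
      all_goals try rfl
      rw [fq]; field_simp
      try ring
    · exact fq_integrable.integrableOn
    · exact (tendsto_arctan'.add tendsto_frac).div_const 2
  rw [key]; simp; ring

lemma int_Ioi_mul_fq : ∫ t in Ioi (0:ℝ), t * fq t = 1 / 2 := by
  have hint : IntegrableOn (fun t : ℝ => t * fq t) (Ioi 0) := by
    apply (abs_fq_integrable.integrableOn).congr_fun ?_ measurableSet_Ioi
    intro t ht
    show |t| * fq t = t * fq t
    rw [abs_of_pos ht]
  have key : ∫ t in Ioi (0:ℝ), t * fq t =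
      0 - (-(2 * (1 + (0:ℝ)^2))⁻¹) := by
    apply integral_Ioi_of_hasDerivAt_of_tendsto'
      (f := fun t => -(2 * (1 + t ^ 2))⁻¹)
    · intro x _
      have h1 : (0:ℝ) < 1 + x ^ 2 := one_add_sq_pos x
      have hd : HasDerivAt (fun t : ℝ => 2 * (1 + t ^ 2)) (2 * (2 * x)) x := by
        have hp : HasDerivAt (fun t : ℝ => 1 + t ^ 2) (2 * x) x := by
          simpa using ((hasDerivAt_pow 2 x).const_add 1)
        exact hp.const_mul 2
      have := (hd.inv (by positivity)).neg
      convert this using 1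
      all_goals try rfl
      rw [fq]; field_simp
      try ring
    · exact hint
    · have h : Tendsto (fun t : ℝ => 2 * (1 + t ^ 2)) atTop atTop := by
        apply tendsto_atTop_mono' _ _ tendsto_id
        filter_upwards [eventually_gt_atTop (0:ℝ)] with t ht
        simp only [id]; nlinarith
      simpa using h.inv_tendsto_atTop.neg
  rw [key]; norm_num

lemma int_Ioi_sq_fq : ∫ t in Ioi (0:ℝ), t ^ 2 * fq t = π / 4 := by
  have key : ∫ t in Ioi (0:ℝ), t ^ 2 * fq t =
      (π/2 - 0)/2 - (arctan 0 - 0 / (1 + (0:ℝ)^2))/2 := by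
    apply integral_Ioi_of_hasDerivAt_of_tendsto'
      (f := fun t => (arctan t - t / (1 + t ^ 2))/2)
    · intro x _
      have h1 : (0:ℝ) < 1 + x ^ 2 := one_add_sq_pos x
      have hd : HasDerivAt (fun t : ℝ => t / (1 + t ^ 2))
          ((1 * (1 + x^2) - x * (2*x)) / (1 + x^2)^2) x := by
        have hp : HasDerivAt (fun t : ℝ => 1 + t ^ 2) (2 * x) x := by
          simpa using ((hasDerivAt_pow 2 x).const_add 1)
        exact (hasDerivAt_id x).div hp (ne_of_gt h1)
      have := ((hasDerivAt_arctan x).sub hd).div_const 2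
      convert this using 1
      all_goals try rfl
      rw [fq]; field_simp
      try ring
    · exact sq_fq_integrable.integrableOn
    · exact (tendsto_arctan'.sub tendsto_frac).div_const 2
  rw [key]; simp; ring

lemma int_fq : ∫ t, fq t = π / 2 := by
  calc ∫ t, fq t = ∫ x, fq |x| := by
        congr 1; funext x; rw [fq, fq, sq_abs]
  _ = 2 * ∫ x in Ioi (0:ℝ), fq x := integral_comp_abs
  _ = π / 2 := by rw [int_Ioi_fq]; ring

lemma int_abs_fq : ∫ t, |t| * fq t = 1 := by
  calc ∫ t, |t| * fq t = ∫ x, |x| * fq |x| := by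
        congr 1; funext x; rw [fq, fq, sq_abs]
  _ = 2 * ∫ x in Ioi (0:ℝ), x * fq x := integral_comp_abs (f := fun s => s * fq s)
  _ = 1 := by rw [int_Ioi_mul_fq]; ring

lemma int_sq_fq : ∫ t, t ^ 2 * fq t = π / 2 := by
  calc ∫ t, t ^ 2 * fq t = ∫ x, |x| ^ 2 * fq |x| := by
        congr 1; funext x; rw [fq, fq, sq_abs]
  _ = 2 * ∫ x in Ioi (0:ℝ), x ^ 2 * fq x := integral_comp_abs (f := fun s => s ^ 2 * fq s)
  _ = π / 2 := by rw [int_Ioi_sq_fq]; ring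

noncomputable def phi (t : ℝ) : ℝ := |t| - 2 / π

lemma phi_fq_eq : (fun t => phi t * fq t) = fun t => |t| * fq t - 2/π * fq t :=
  funext fun t => by rw [phi, sub_mul]

lemma phi_fq_integrable : Integrable (fun t => phi t * fq t) := by
  rw [phi_fq_eq]; exact abs_fq_integrable.sub (fq_integrable.const_mul _)

lemma int_phi_fq : ∫ t, phi t * fq t = 0 := by
  rw [phi_fq_eq, integral_sub abs_fq_integrable (fq_integrable.const_mul _),
    integral_const_mul, int_abs_fq, int_fq]
  have := pi_ne_zero
  field_simp
  try simp

lemma phi_sq_fq_eq : (fun t => phi t * phi t * fq t) =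
    fun t => t ^ 2 * fq t - 4/π * (|t| * fq t) + 4/π^2 * fq t := by
  funext t
  have h : |t| * |t| = t ^ 2 := by rw [← sq_abs]; ring
  rw [phi]
  linear_combination fq t * h

lemma phi_sq_fq_integrable : Integrable (fun t => phi t * phi t * fq t) := by
  have h1 : Integrable (fun t : ℝ => t ^ 2 * fq t - 4/π * (|t| * fq t)) :=
    sq_fq_integrable.sub (abs_fq_integrable.const_mul _)
  rw [phi_sq_fq_eq]
  exact h1.add (fq_integrable.const_mul _)

lemma int_phi_sq_fq : ∫ t, phi t * phi t * fq t = π/2 - 2/π := by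
  have h1 : Integrable (fun t : ℝ => t ^ 2 * fq t - 4/π * (|t| * fq t)) :=
    sq_fq_integrable.sub (abs_fq_integrable.const_mul _)
  rw [phi_sq_fq_eq,
    integral_add h1 (fq_integrable.const_mul _),
    integral_sub sq_fq_integrable (abs_fq_integrable.const_mul _),
    integral_const_mul, integral_const_mul, int_sq_fq, int_abs_fq, int_fq]
  have := pi_ne_zero
  field_simp
  ring

/-- For every integer `M ≥ 2`,
`∫_{‖u‖₁ ≤ 2M} ∏_j (1 + u_j²)^{-2} du ≥ (1 − 1/M)·(π/2)^M`. -/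
theorem normalizing_constant_lower_bound (M : ℕ) (hM : 2 ≤ M) :
    (1 - 1 / (M : ℝ)) * (Real.pi / 2) ^ M ≤
      ∫ u in {u : Fin M → ℝ | (∑ j, |u j|) ≤ 2 * M}, ∏ j, ((1 + u j ^ 2) ^ 2)⁻¹ := by
  have hMpos : (0:ℝ) < M := by exact_mod_cast lt_of_lt_of_le Nat.zero_lt_two hM
  have hπ := Real.pi_pos
  have hπ3 := Real.pi_gt_three
  set A : Set (Fin M → ℝ) := {u | (∑ j, |u j|) ≤ 2 * M} with hAdef
  have hA : MeasurableSet A := by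
    apply measurableSet_le
    · exact Finset.measurable_sum _ (fun j _ => (measurable_pi_apply j).abs)
    · exact measurable_const
  set P : (Fin M → ℝ) → ℝ := fun u => ∏ j, fq (u j) with hPdef
  have goal_eq : (∫ u in A, ∏ j, ((1 + u j ^ 2) ^ 2)⁻¹) = ∫ u in A, P u := rfl
  rw [goal_eq]
  have hP_int : Integrable P :=
    Integrable.fintype_prod (f := fun _ : Fin M => fq) (fun _ => fq_integrable)
  have hP_val : ∫ u, P u = (π/2) ^ M := by
    rw [hPdef, integral_fintype_prod_volume_eq_pow (ι := Fin M) fq, int_fq, Fintype.card_fin]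
  have hP_nonneg : ∀ u, 0 ≤ P u := fun u => Finset.prod_nonneg (fun j _ => fq_nonneg _)
  set G : Fin M → Fin M → Fin M → ℝ → ℝ :=
    fun j k i t => (if i = j then phi t else 1) * (if i = k then phi t else 1) * fq t with hGdef
  have hG_int : ∀ j k i, Integrable (G j k i) := by
    intro j k i
    rcases eq_or_ne i j with h1 | h1 <;> rcases eq_or_ne i k with h2 | h2
    · simp only [hGdef, if_pos h1, if_pos h2]; exact phi_sq_fq_integrable
    · simp only [hGdef, if_pos h1, if_neg h2, mul_one]; exact phi_fq_integrable
    · simp only [hGdef, if_neg h1, if_pos h2, one_mul]; exact phi_fq_integrable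
    · simp only [hGdef, if_neg h1, if_neg h2, one_mul, mul_one]; exact fq_integrable
  have hG_val_diag : ∀ j i : Fin M, (∫ t, G j j i t) = if i = j then (π/2 - 2/π) else π/2 := by
    intro j i
    rcases eq_or_ne i j with h1 | h1
    · simp only [hGdef, if_pos h1]
      exact int_phi_sq_fq
    · simp only [hGdef, if_neg h1, one_mul, mul_one]
      exact int_fq
  have hG_prod : ∀ j k,
      (∫ u : Fin M → ℝ, ∏ i, G j k i (u i)) =
        if j = k then (π/2 - 2/π) * (π/2)^(M-1) else 0 := by
    intro j k
    rw [integral_fintype_prod_volume_eq_prod (ι := Fin M) (fun i => G j k i)]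
    rcases eq_or_ne j k with h | h
    · subst h
      rw [if_pos rfl, ← Finset.mul_prod_erase Finset.univ _ (Finset.mem_univ j)]
      have e1 : (∫ t, G j j j t) = π/2 - 2/π := by rw [hG_val_diag j j, if_pos rfl]
      have e2 : ∀ i ∈ Finset.univ.erase j, (∫ t, G j j i t) = π/2 := by
        intro i hi
        rw [hG_val_diag j i, if_neg (Finset.ne_of_mem_erase hi)]
      rw [e1, Finset.prod_congr rfl e2, Finset.prod_const,
        Finset.card_erase_of_mem (Finset.mem_univ j), Finset.card_univ, Fintype.card_fin]
    · rw [if_neg h]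
      apply Finset.prod_eq_zero (Finset.mem_univ j)
      have e : (∫ t, G j k j t) = ∫ t, phi t * fq t := by
        congr 1; funext t
        simp [hGdef, h]
      rw [e, int_phi_fq]
  have hGP : ∀ (j k : Fin M) (u : Fin M → ℝ),
      phi (u j) * phi (u k) * P u = ∏ i, G j k i (u i) := by
    intro j k u
    simp only [hGdef, hPdef]
    rw [Finset.prod_mul_distrib, Finset.prod_mul_distrib]
    congr 2
    · exact ((Finset.prod_ite_eq' Finset.univ j (fun i => phi (u i))).trans
        (if_pos (Finset.mem_univ j))).symm
    · exact ((Finset.prod_ite_eq' Finset.univ k (fun i => phi (u i))).trans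
        (if_pos (Finset.mem_univ k))).symm
  set Q : (Fin M → ℝ) → ℝ := fun u => (∑ j, phi (u j))^2 * P u with hQdef
  have hQ_eq : Q = fun u => ∑ j, ∑ k, ∏ i, G j k i (u i) := by
    funext u
    simp only [hQdef]
    rw [pow_two, Finset.sum_mul_sum, Finset.sum_mul]
    refine Finset.sum_congr rfl (fun j _ => ?_)
    rw [Finset.sum_mul]
    exact Finset.sum_congr rfl (fun k _ => hGP j k u)
  have hGint : ∀ j k, Integrable (fun u : Fin M → ℝ => ∏ i, G j k i (u i)) :=
    fun j k => Integrable.fintype_prod (f := fun i => G j k i) (fun i => hG_int j k i)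
  have hQ_int : Integrable Q := by
    rw [hQ_eq]
    exact integrable_finset_sum _ (fun j _ => integrable_finset_sum _ (fun k _ => hGint j k))
  have hQ_nonneg : ∀ u, 0 ≤ Q u := fun u => mul_nonneg (sq_nonneg _) (hP_nonneg u)
  have hQ_val : ∫ u, Q u = M * ((π/2 - 2/π) * (π/2)^(M-1)) := by
    rw [hQ_eq, integral_finset_sum _ (fun j _ =>
      integrable_finset_sum _ (fun k _ => hGint j k))]
    rw [Finset.sum_congr rfl (fun j _ => integral_finset_sum _ (fun k _ => hGint j k))]
    rw [Finset.sum_congr rfl (fun j (_ : j ∈ Finset.univ) =>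
      Finset.sum_congr rfl (fun k _ => hG_prod j k))]
    have inner : ∀ j : Fin M,
        (∑ k, if j = k then (π/2 - 2/π) * (π/2)^(M-1) else 0) =
          (π/2 - 2/π) * (π/2)^(M-1) := by
      intro j
      rw [Finset.sum_ite_eq]
      exact if_pos (Finset.mem_univ j)
    rw [Finset.sum_congr rfl (fun j _ => inner j), Finset.sum_const, Finset.card_univ,
      Fintype.card_fin, nsmul_eq_mul]
  set c : ℝ := (M:ℝ) * (2 - 2/π) with hcdef
  have hs : (0:ℝ) < 2 - 2/π := by
    have : 2/π < 1 := by rw [div_lt_one hπ]; linarith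
    linarith
  have hc : 0 < c := mul_pos hMpos hs
  have hc2 : (0:ℝ) < c^2 := by positivity
  have hAc : ∀ u ∈ Aᶜ, P u ≤ (c^2)⁻¹ * Q u := by
    intro u hu
    have hsum : 2 * (M:ℝ) < ∑ j, |u j| := by
      simp only [Set.mem_compl_iff, hAdef, Set.mem_setOf_eq, not_le] at hu
      exact hu
    have hphi : c ≤ ∑ j, phi (u j) := by
      have e : ∑ j, phi (u j) = (∑ j, |u j|) - M * (2/π) := by
        simp only [phi]
        rw [Finset.sum_sub_distrib, Finset.sum_const, Finset.card_univ, Fintype.card_fin,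
          nsmul_eq_mul]
      have e2 : c = 2 * M - M * (2/π) := by rw [hcdef]; ring
      rw [e, e2]
      linarith
    have hq : c^2 ≤ (∑ j, phi (u j))^2 := pow_le_pow_left₀ hc.le hphi 2
    have calc1 : P u = (c^2)⁻¹ * (c^2 * P u) := by field_simp
    rw [calc1]
    simp only [hQdef]
    exact mul_le_mul_of_nonneg_left (mul_le_mul_of_nonneg_right hq (hP_nonneg u))
      (inv_nonneg.mpr hc2.le)
  have h2 : ∫ u in Aᶜ, P u ≤ ∫ u in Aᶜ, (c^2)⁻¹ * Q u :=
    setIntegral_mono_on hP_int.integrableOn (hQ_int.const_mul _).integrableOn hA.compl hAc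
  have h3 : ∫ u in Aᶜ, (c^2)⁻¹ * Q u = (c^2)⁻¹ * ∫ u in Aᶜ, Q u := integral_const_mul _ _
  have h4 : ∫ u in Aᶜ, Q u ≤ ∫ u, Q u :=
    setIntegral_le_integral hQ_int (Filter.Eventually.of_forall hQ_nonneg)
  have hsplit : (∫ u in A, P u) + ∫ u in Aᶜ, P u = ∫ u, P u := integral_add_compl hA hP_int
  have hV : π/2 - 2/π ≤ (2 - 2/π)^2 * (π/2) := by
    have e : (2 - 2/π)^2 * (π/2) = 2*π - 4 + 2/π := by field_simp; ring
    have h2π : (0:ℝ) < 2/π := by positivity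
    rw [e]
    linarith
  have hK : (0:ℝ) < (π/2)^(M-1) := by positivity
  have hpow : (π/2:ℝ)^M = (π/2)^(M-1) * (π/2) := by
    rw [← pow_succ]
    congr 1
    omega
  have tail : ∫ u in Aᶜ, P u ≤ 1/M * (π/2)^M := by
    have step : (c^2)⁻¹ * ((M:ℝ) * ((π/2 - 2/π) * (π/2)^(M-1))) ≤ 1/M * (π/2)^M := by
      rw [hpow]
      set V : ℝ := π/2 - 2/π with hVdef
      set K : ℝ := ((π:ℝ)/2)^(M-1) with hKdef
      rw [hcdef]
      set s : ℝ := 2 - 2/π with hsdef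
      clear_value V K s
      have hsne : s ≠ 0 := ne_of_gt hs
      have hMne : (M:ℝ) ≠ 0 := ne_of_gt hMpos
      have hπne : π ≠ 0 := ne_of_gt hπ
      have e1 : (((M:ℝ) * s)^2)⁻¹ * ((M:ℝ) * (V * K)) = (V * K) / (M * s^2) := by
        field_simp
      have e2 : (1:ℝ)/M * (K * (π/2)) = ((s^2 * (π/2)) * K) / (M * s^2) := by
        field_simp
      rw [e1, e2, div_eq_mul_inv, div_eq_mul_inv]
      have hinv : (0:ℝ) ≤ ((M:ℝ) * s^2)⁻¹ := by positivity
      exact mul_le_mul_of_nonneg_right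
        (mul_le_mul_of_nonneg_right hV hK.le) hinv
    calc ∫ u in Aᶜ, P u ≤ (c^2)⁻¹ * ∫ u in Aᶜ, Q u := by rw [← h3]; exact h2
    _ ≤ (c^2)⁻¹ * ∫ u, Q u := mul_le_mul_of_nonneg_left h4 (inv_nonneg.mpr hc2.le)
    _ = (c^2)⁻¹ * ((M:ℝ) * ((π/2 - 2/π) * (π/2)^(M-1))) := by rw [hQ_val]
    _ ≤ 1/M * (π/2)^M := step
  have e : (1 - 1/(M:ℝ)) * (π/2)^M = (π/2)^M - 1/M * (π/2)^M := by ring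
  rw [e]
  rw [hP_val] at hsplit
  linarith
end
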